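/- arXiv:1712.00686 — 2 statements merged into one kernel-verified Lean document; each statement's English description precedes it below -/
import Mathlib

section
/- Let D=(V,E) be a finite multidigraph and let e be an arc of D. If e is a loop then σ̂π(D;x,y,z) = σ̂π(D_{-e};x,y,z) + x·y·σ̂π(D_{/e};x,y,z); if e is not a loop then σ̂π(D;x,y,z) = σ̂π(D_{-e};x,y,z) + x·σ̂π(D_{/e};x,y,z) + x·(z−1)·σ̂π(D_{†e};x,y,z). Moreover σ̂π(E_n;x,y,z)=1 for every arc-less digraph E_n. -/
open Classical

/-- A finite multidigraph: a finite set `V` of vertices (natural numbers),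
a finite set `A` of arc identifiers, and a map `ends` assigning to each arc
identifier its (source, target) pair of vertices.  Parallel arcs are distinct
identifiers with the same endpoints; loops are arcs with equal endpoints. -/
structure MDigraph where
  V : Finset ℕ
  A : Finset ℕ
  ends : ℕ → ℕ × ℕ

namespace MDigraph

/-- Every arc has both endpoints in the vertex set. -/
def WellFormed (D : MDigraph) : Prop :=
  ∀ a ∈ D.A, (D.ends a).1 ∈ D.V ∧ (D.ends a).2 ∈ D.V

/-- An arc is a loop if its source equals its target. -/
def IsLoop (D : MDigraph) (e : ℕ) : Prop := (D.ends e).1 = (D.ends e).2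

/-- Arc deletion `D_{-e}`. -/
def delArc (D : MDigraph) (e : ℕ) : MDigraph := ⟨D.V, D.A.erase e, D.ends⟩

/-- Arc contraction `D_{/e}`.  For a non-loop arc `e = (u,v)`: merge `u` and `v`
into a single vertex (named `u`), removing exactly the arcs of the form `(u,x)`
and `(y,v)`.  For a loop `e = (u,u)`: delete `u` together with all incident arcs. -/
noncomputable def contractArc (D : MDigraph) (e : ℕ) : MDigraph :=
  let u := (D.ends e).1
  let v := (D.ends e).2
  if u = v then
    ⟨D.V.erase u, D.A.filter (fun a => (D.ends a).1 ≠ u ∧ (D.ends a).2 ≠ u), D.ends⟩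
  else
    ⟨D.V.erase v, D.A.filter (fun a => (D.ends a).1 ≠ u ∧ (D.ends a).2 ≠ v),
      fun a => ((if (D.ends a).1 = v then u else (D.ends a).1),
                (if (D.ends a).2 = v then u else (D.ends a).2))⟩

/-- Arc extraction `D_{†e}`: delete both endpoints of `e` and all arcs incident to them. -/
noncomputable def extractArc (D : MDigraph) (e : ℕ) : MDigraph :=
  let u := (D.ends e).1
  let v := (D.ends e).2
  ⟨(D.V.erase u).erase v,
   D.A.filter (fun a =>
     (D.ends a).1 ≠ u ∧ (D.ends a).1 ≠ v ∧ (D.ends a).2 ≠ u ∧ (D.ends a).2 ≠ v),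
   D.ends⟩

/-- Add one new arc with endpoints `p` (using a fresh arc identifier). -/
noncomputable def addArc (D : MDigraph) (p : ℕ × ℕ) : MDigraph :=
  ⟨D.V, insert (D.A.sup id + 1) D.A, Function.update D.ends (D.A.sup id + 1) p⟩

/-- Vertex deletion `D_{-v}`. -/
noncomputable def delVertex (D : MDigraph) (v : ℕ) : MDigraph :=
  ⟨D.V.erase v, D.A.filter (fun a => (D.ends a).1 ≠ v ∧ (D.ends a).2 ≠ v), D.ends⟩

/-- Vertex contraction `D_{/v}`: delete `v`, and for every arc `(u,v)` into `v`
and every arc `(v,w)` out of `v` add a new arc `(u,w)`; thus the multiplicity of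
a new arc `(u,w)` is the multiplicity of `(u,v)` times that of `(v,w)`. -/
noncomputable def contractVertex (D : MDigraph) (v : ℕ) : MDigraph :=
  ⟨D.V.erase v,
   ((D.A.filter (fun a => (D.ends a).1 ≠ v ∧ (D.ends a).2 ≠ v)).image (fun a => 2 * a)) ∪
     (((D.A.filter (fun a => (D.ends a).2 = v)) ×ˢ (D.A.filter (fun a => (D.ends a).1 = v))).image
       (fun p => 2 * Nat.pair p.1 p.2 + 1)),
   fun n =>
     if n % 2 = 0 then D.ends (n / 2)
     else ((D.ends (Nat.unpair ((n - 1) / 2)).1).1, (D.ends (Nat.unpair ((n - 1) / 2)).2).2)⟩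

/-- The arc-less digraph on `n` vertices. -/
def emptyD (n : ℕ) : MDigraph := ⟨Finset.range n, ∅, fun _ => (0, 0)⟩

/-- Disjoint union of two multidigraphs (vertices and arcs relabelled evenly/oddly). -/
noncomputable def disjUnion (D₁ D₂ : MDigraph) : MDigraph :=
  ⟨(D₁.V.image (fun v => 2 * v)) ∪ (D₂.V.image (fun v => 2 * v + 1)),
   (D₁.A.image (fun a => 2 * a)) ∪ (D₂.A.image (fun a => 2 * a + 1)),
   fun n =>
     if n % 2 = 0 then (2 * (D₁.ends (n / 2)).1, 2 * (D₁.ends (n / 2)).2)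
     else (2 * (D₂.ends (n / 2)).1 + 1, 2 * (D₂.ends (n / 2)).2 + 1)⟩

/-- Isomorphism of multidigraphs. -/
def Iso (D₁ D₂ : MDigraph) : Prop :=
  ∃ φ ψ : ℕ → ℕ, Set.BijOn φ ↑D₁.V ↑D₂.V ∧ Set.BijOn ψ ↑D₁.A ↑D₂.A ∧
    ∀ a ∈ D₁.A, D₂.ends (ψ a) = (φ (D₁.ends a).1, φ (D₁.ends a).2)

/-- `C` is (the arc set of) a directed cycle of length `k` in `D`: `k` distinct arcs
forming a closed directed walk through `k` distinct vertices (`k ≥ 1`;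
a loop is a directed cycle of length 1). -/
def IsCycle (D : MDigraph) (C : Finset ℕ) (k : ℕ) : Prop :=
  1 ≤ k ∧ ∃ v a : ℕ → ℕ,
    (∀ i j, i < k → j < k → v i = v j → i = j) ∧
    (∀ i j, i < k → j < k → a i = a j → i = j) ∧
    (∀ i, i < k → a i ∈ D.A ∧ D.ends (a i) = (v i, v ((i + 1) % k))) ∧
    C = (Finset.range k).image a

/-- `P` is (the arc set of) a directed path of length `k` in `D`: `k` distinct arcs
forming a directed walk through `k+1` distinct vertices (`k ≥ 1`). -/
def IsPath (D : MDigraph) (P : Finset ℕ) (k : ℕ) : Prop :=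
  1 ≤ k ∧ ∃ v a : ℕ → ℕ,
    (∀ i j, i ≤ k → j ≤ k → v i = v j → i = j) ∧
    (∀ i j, i < k → j < k → a i = a j → i = j) ∧
    (∀ i, i < k → a i ∈ D.A ∧ D.ends (a i) = (v i, v (i + 1))) ∧
    P = (Finset.range k).image a

/-- Number `c_k(D)` of directed cycles of length `k`. -/
noncomputable def cycCount (D : MDigraph) (k : ℕ) : ℕ :=
  (D.A.powerset.filter (fun C => IsCycle D C k)).card

/-- Number `p_k(D)` of directed paths of length `k`. -/
noncomputable def pathCount (D : MDigraph) (k : ℕ) : ℕ :=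
  (D.A.powerset.filter (fun P => IsPath D P k)).card

/-- The cycle polynomial `σ(D;x) = ∑_k c_k(D) x^k`. -/
noncomputable def cyclePoly (D : MDigraph) : Polynomial ℝ :=
  ∑ k ∈ Finset.range (D.A.card + 1), (cycCount D k : ℝ) • Polynomial.X ^ k

/-- The path polynomial `π(D;x) = ∑_k p_k(D) x^k`. -/
noncomputable def pathPoly (D : MDigraph) : Polynomial ℝ :=
  ∑ k ∈ Finset.range (D.A.card + 1), (pathCount D k : ℝ) • Polynomial.X ^ k


/-- Out-degree of `v`: arcs with tail `v`, counted with multiplicity. -/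
noncomputable def outDeg (D : MDigraph) (v : ℕ) : ℕ :=
  (D.A.filter (fun a => (D.ends a).1 = v)).card

/-- In-degree of `v`: arcs with head `v`, counted with multiplicity. -/
noncomputable def inDeg (D : MDigraph) (v : ℕ) : ℕ :=
  (D.A.filter (fun a => (D.ends a).2 = v)).card

/-- `P` is a directed path of length `k` in `D` beginning at `v0`. -/
def IsPathFrom (D : MDigraph) (v0 : ℕ) (P : Finset ℕ) (k : ℕ) : Prop :=
  1 ≤ k ∧ ∃ v a : ℕ → ℕ, v 0 = v0 ∧
    (∀ i j, i ≤ k → j ≤ k → v i = v j → i = j) ∧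
    (∀ i j, i < k → j < k → a i = a j → i = j) ∧
    (∀ i, i < k → a i ∈ D.A ∧ D.ends (a i) = (v i, v (i + 1))) ∧
    P = (Finset.range k).image a

/-- `P` is a directed path of length `k` in `D` ending at `v0`. -/
def IsPathTo (D : MDigraph) (v0 : ℕ) (P : Finset ℕ) (k : ℕ) : Prop :=
  1 ≤ k ∧ ∃ v a : ℕ → ℕ, v k = v0 ∧
    (∀ i j, i ≤ k → j ≤ k → v i = v j → i = j) ∧
    (∀ i j, i < k → j < k → a i = a j → i = j) ∧
    (∀ i, i < k → a i ∈ D.A ∧ D.ends (a i) = (v i, v (i + 1))) ∧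
    P = (Finset.range k).image a

/-- `p_k(D,v,+)`: number of directed paths of length `k` beginning at `v`. -/
noncomputable def pathFromCount (D : MDigraph) (v : ℕ) (k : ℕ) : ℕ :=
  (D.A.powerset.filter (fun P => IsPathFrom D v P k)).card

/-- `p_k(D,v,−)`: number of directed paths of length `k` ending at `v`. -/
noncomputable def pathToCount (D : MDigraph) (v : ℕ) (k : ℕ) : ℕ :=
  (D.A.powerset.filter (fun P => IsPathTo D v P k)).card

/-- `π_{v+}(D;x) = ∑_k p_k(D,v,+) x^k`. -/
noncomputable def pathFromPoly (D : MDigraph) (v : ℕ) : Polynomial ℝ :=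
  ∑ k ∈ Finset.range (D.A.card + 1), (pathFromCount D v k : ℝ) • Polynomial.X ^ k

/-- `π_{v-}(D;x) = ∑_k p_k(D,v,−) x^k`. -/
noncomputable def pathToPoly (D : MDigraph) (v : ℕ) : Polynomial ℝ :=
  ∑ k ∈ Finset.range (D.A.card + 1), (pathToCount D v k : ℝ) • Polynomial.X ^ k

/-- In the spanning subgraph `D⟨F⟩`, every vertex has out-degree ≤ 1 and
in-degree ≤ 1; equivalently, every component of `D⟨F⟩` is a directed cycle,
a directed path, or an isolated vertex. -/
def DegOK (D : MDigraph) (F : Finset ℕ) : Prop :=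
  ∀ w : ℕ, (F.filter (fun a => (D.ends a).1 = w)).card ≤ 1 ∧
    (F.filter (fun a => (D.ends a).2 = w)).card ≤ 1

/-- `kc(D⟨F⟩)`: the number of components of the spanning subgraph `D⟨F⟩` that are
directed cycles (for degree-constrained `F`, these are exactly the directed
cycles contained in `F`). -/
noncomputable def kcF (D : MDigraph) (F : Finset ℕ) : ℕ :=
  (F.powerset.filter (fun C => ∃ k, IsCycle D C k)).card

/-- `kp(D⟨F⟩)`: the number of components of the spanning subgraph `D⟨F⟩` that are
directed paths with at least one arc (for degree-constrained `F`, counted by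
their initial vertices: vertices that are the tail of an arc of `F` but the
head of no arc of `F`). -/
noncomputable def kpF (D : MDigraph) (F : Finset ℕ) : ℕ :=
  ((F.image (fun a => (D.ends a).1)).filter
    (fun w => (F.filter (fun a => (D.ends a).2 = w)).card = 0)).card

/-- The number of vertices covered by (incident to) the arcs of `F`. -/
noncomputable def coveredCard (D : MDigraph) (F : Finset ℕ) : ℕ :=
  ((F.image (fun a => (D.ends a).1)) ∪ (F.image (fun a => (D.ends a).2))).card

/-- `k(D⟨F⟩)`: total number of connected components of the spanning subgraph
`D⟨F⟩` (isolated vertices included), for degree-constrained `F` in a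
well-formed digraph. -/
noncomputable def kF (D : MDigraph) (F : Finset ℕ) : ℕ :=
  D.V.card - coveredCard D F + kcF D F + kpF D F

/-- `c(D⟨F⟩)`: number of covered components (components with at least one arc). -/
noncomputable def cF (D : MDigraph) (F : Finset ℕ) : ℕ := kcF D F + kpF D F

/-- `c₁(D⟨F⟩)`: number of loops in `F`. -/
noncomputable def loopCount (D : MDigraph) (F : Finset ℕ) : ℕ :=
  (F.filter (fun a => (D.ends a).1 = (D.ends a).2)).card

/-- The bivariate cycle polynomial
`σ̂(D;x,y) = ∑_F x^{|F|} y^{kc(D⟨F⟩)}`, the sum being over all arc subsets `F`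
such that every component of `D⟨F⟩` is a directed cycle or an isolated vertex. -/
noncomputable def biCycPoly (D : MDigraph) : MvPolynomial (Fin 2) ℝ :=
  ∑ F ∈ D.A.powerset.filter (fun F => DegOK D F ∧ kpF D F = 0),
    MvPolynomial.X 0 ^ F.card * MvPolynomial.X 1 ^ kcF D F

/-- The bivariate path polynomial
`π̂(D;x,y) = ∑_F x^{|F|} y^{kp(D⟨F⟩)}`, the sum being over all arc subsets `F`
such that every component of `D⟨F⟩` is a directed path or an isolated vertex. -/
noncomputable def biPathPoly (D : MDigraph) : MvPolynomial (Fin 2) ℝ :=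
  ∑ F ∈ D.A.powerset.filter (fun F => DegOK D F ∧ kcF D F = 0),
    MvPolynomial.X 0 ^ F.card * MvPolynomial.X 1 ^ kpF D F

/-- The trivariate cycle-path polynomial
`σ̂π(D;x,y,z) = ∑_F x^{|F|} y^{kc(D⟨F⟩)} z^{kp(D⟨F⟩)}`, the sum being over all
arc subsets `F` in which every vertex has in- and out-degree at most 1. -/
noncomputable def triPoly (D : MDigraph) : MvPolynomial (Fin 3) ℝ :=
  ∑ F ∈ D.A.powerset.filter (fun F => DegOK D F),
    MvPolynomial.X 0 ^ F.card * MvPolynomial.X 1 ^ kcF D F * MvPolynomial.X 2 ^ kpF D F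

/-- The geometric cover polynomial `C̃(D;x,y) = ∑_{i,j} c_{i,j}(D) x^i y^j`,
where `c_{i,j}(D)` is the number of ways of disjointly covering all vertices of
`D` with `i` directed paths and `j` directed cycles (isolated vertices counting
as paths of length 0): a cover is an arc subset `F` with all in- and out-degrees
at most 1, contributing `j = kc(D⟨F⟩)` cycles and
`i = kp(D⟨F⟩) + (number of uncovered vertices)` paths. -/
noncomputable def geomCover (D : MDigraph) (x y : ℝ) : ℝ :=
  ∑ F ∈ D.A.powerset.filter (fun F => DegOK D F),
    x ^ (kpF D F + (D.V.card - coveredCard D F)) * y ^ kcF D F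

/-- No vertex is incident both to an arc of `A` and to an arc of `B`. -/
def NoCommonVertex (D : MDigraph) (A B : Finset ℕ) : Prop :=
  ∀ a ∈ A, ∀ b ∈ B,
    (D.ends a).1 ≠ (D.ends b).1 ∧ (D.ends a).1 ≠ (D.ends b).2 ∧
    (D.ends a).2 ≠ (D.ends b).1 ∧ (D.ends a).2 ≠ (D.ends b).2

/-- The explicit polynomial
`N(D;x,y,z) = ∑_{(A,B)} x^{k(D⟨A∪B⟩)−c(D⟨B⟩)−c₁(D⟨A⟩)} y^{|A|+|B|−c(D⟨B⟩)} z^{c(D⟨B⟩)}`,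
summing over pairs of disjoint arc subsets `A, B` sharing no vertex such that
every component of `D⟨A∪B⟩` is a directed cycle, a directed path or an isolated
vertex. -/
noncomputable def NPoly (D : MDigraph) : MvPolynomial (Fin 3) ℝ :=
  ∑ p ∈ (D.A.powerset ×ˢ D.A.powerset).filter
      (fun p => Disjoint p.1 p.2 ∧ NoCommonVertex D p.1 p.2 ∧ DegOK D (p.1 ∪ p.2)),
    MvPolynomial.X 0 ^ (kF D (p.1 ∪ p.2) - cF D p.2 - loopCount D p.1) *
      MvPolynomial.X 1 ^ (p.1.card + p.2.card - cF D p.2) *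
      MvPolynomial.X 2 ^ cF D p.2

end MDigraph

/-- A finite undirected graph: a finite vertex set and a finite set of
unordered pairs as edges. -/
structure SGraph where
  V : Finset ℕ
  E : Finset (Sym2 ℕ)

namespace SGraph

/-- `G` is a simple graph: no loops, and all edge endpoints are vertices. -/
def Simple (G : SGraph) : Prop :=
  (∀ s ∈ G.E, ¬ s.IsDiag) ∧ ∀ s ∈ G.E, ∀ a ∈ s, a ∈ G.V

/-- `P` is (the edge set of) an undirected path of length `k` in `G`. -/
def IsUPath (G : SGraph) (P : Finset (Sym2 ℕ)) (k : ℕ) : Prop :=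
  1 ≤ k ∧ ∃ v : ℕ → ℕ,
    (∀ i j, i ≤ k → j ≤ k → v i = v j → i = j) ∧
    (∀ i, i < k → s(v i, v (i + 1)) ∈ G.E) ∧
    P = (Finset.range k).image (fun i => s(v i, v (i + 1)))

/-- `C` is (the edge set of) an undirected cycle of length `k ≥ 3` in `G`. -/
def IsUCycle (G : SGraph) (C : Finset (Sym2 ℕ)) (k : ℕ) : Prop :=
  3 ≤ k ∧ ∃ v : ℕ → ℕ,
    (∀ i j, i < k → j < k → v i = v j → i = j) ∧
    (∀ i, i < k → s(v i, v ((i + 1) % k)) ∈ G.E) ∧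
    C = (Finset.range k).image (fun i => s(v i, v ((i + 1) % k)))

/-- `p_k(G)`: number of undirected paths of length `k` in `G`. -/
noncomputable def uPathCount (G : SGraph) (k : ℕ) : ℕ :=
  (G.E.powerset.filter (fun P => IsUPath G P k)).card

/-- `c_k(G)`: number of undirected cycles of length `k` in `G`. -/
noncomputable def uCycCount (G : SGraph) (k : ℕ) : ℕ :=
  (G.E.powerset.filter (fun C => IsUCycle G C k)).card

/-- `π(G;x) = ∑_k p_k(G) x^k`. -/
noncomputable def uPathPoly (G : SGraph) : Polynomial ℝ :=
  ∑ k ∈ Finset.range (G.E.card + 1), (uPathCount G k : ℝ) • Polynomial.X ^ k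

/-- `σ(G;x) = ∑_k c_k(G) x^k`. -/
noncomputable def uCycPoly (G : SGraph) : Polynomial ℝ :=
  ∑ k ∈ Finset.range (G.E.card + 1), (uCycCount G k : ℝ) • Polynomial.X ^ k

/-- The digraph `D(G)` obtained from `G` by replacing each edge `{u,v}` by the
two oppositely oriented arcs `(u,v)` and `(v,u)`. -/
noncomputable def toDigraph (G : SGraph) : MDigraph :=
  ⟨G.V, ((G.V ×ˢ G.V).filter (fun p => s(p.1, p.2) ∈ G.E)).image (fun p => Nat.pair p.1 p.2),
   Nat.unpair⟩

end SGraph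

namespace MDigraph

/-! ### Arithmetic helpers -/

lemma mod_add_cancel {k i j s : ℕ} (hi : i < k) (hj : j < k)
    (h : (i + s) % k = (j + s) % k) : i = j := by
  have h1 : i % k = j % k := Nat.ModEq.add_right_cancel' s h
  rwa [Nat.mod_eq_of_lt hi, Nat.mod_eq_of_lt hj] at h1

lemma prev_succ_mod {k i : ℕ} (hk : 1 ≤ k) (hi : i < k) :
    ((i + k - 1) % k + 1) % k = i := by
  rw [Nat.mod_add_mod]
  have h1 : i + k - 1 + 1 = i + k := by omega
  rw [h1, Nat.add_mod_right]
  exact Nat.mod_eq_of_lt hi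

lemma image_rot (a : ℕ → ℕ) (k s : ℕ) :
    (Finset.range k).image (fun i => a ((i + s) % k)) = (Finset.range k).image a := by
  rcases Nat.eq_zero_or_pos k with rfl | hk
  · simp
  apply Finset.Subset.antisymm
  · intro x hx
    simp only [Finset.mem_image, Finset.mem_range] at *
    obtain ⟨i, _, rfl⟩ := hx
    exact ⟨(i + s) % k, Nat.mod_lt _ hk, rfl⟩
  · intro x hx
    simp only [Finset.mem_image, Finset.mem_range] at *
    obtain ⟨i, hi, rfl⟩ := hx
    refine ⟨(i + k - s % k) % k, Nat.mod_lt _ hk, ?_⟩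
    congr 1
    have hs : s % k < k := Nat.mod_lt _ hk
    have h2 : (i + k - s % k) % k + s = ((i + k - s % k) % k + s % k) + k * (s / k) := by
      have := Nat.mod_add_div s k
      omega
    rw [h2, Nat.add_mul_mod_self_left, Nat.mod_add_mod]
    have h3 : i + k - s % k + s % k = i + k := by omega
    rw [h3, Nat.add_mod_right]
    exact Nat.mod_eq_of_lt hi

/-! ### Cycle transfer helpers -/

lemma isCycle_mono {D D' : MDigraph} {C : Finset ℕ} {k : ℕ}
    (hA : ∀ x ∈ C, x ∈ D.A → x ∈ D'.A)
    (hE : ∀ x ∈ C, D'.ends x = D.ends x)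
    (h : IsCycle D C k) : IsCycle D' C k := by
  obtain ⟨hk, v, a, hv, ha, harc, hC⟩ := h
  refine ⟨hk, v, a, hv, ha, fun i hi => ?_, hC⟩
  have hmem : a i ∈ C := by
    rw [hC]; exact Finset.mem_image_of_mem _ (Finset.mem_range.mpr hi)
  exact ⟨hA _ hmem (harc i hi).1, by rw [hE _ hmem, (harc i hi).2]⟩

lemma IsCycle.nonempty {D : MDigraph} {C : Finset ℕ} {k : ℕ} (h : IsCycle D C k) :
    C.Nonempty := by
  obtain ⟨hk, v, a, _, _, _, hC⟩ := h
  exact ⟨a 0, by rw [hC]; exact Finset.mem_image_of_mem _ (Finset.mem_range.mpr hk)⟩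

lemma IsCycle.rot {D : MDigraph} {C : Finset ℕ} {k : ℕ} (h : IsCycle D C k)
    {x : ℕ} (hx : x ∈ C) :
    ∃ v a : ℕ → ℕ,
      (∀ i j, i < k → j < k → v i = v j → i = j) ∧
      (∀ i j, i < k → j < k → a i = a j → i = j) ∧
      (∀ i, i < k → a i ∈ D.A ∧ D.ends (a i) = (v i, v ((i + 1) % k))) ∧
      C = (Finset.range k).image a ∧ a (k - 1) = x := by
  obtain ⟨hk, v, a, hv, ha, harc, hC⟩ := h
  rw [hC] at hx
  simp only [Finset.mem_image, Finset.mem_range] at hx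
  obtain ⟨i0, hi0, hax⟩ := hx
  refine ⟨fun i => v ((i + (i0 + 1) % k) % k), fun i => a ((i + (i0 + 1) % k) % k),
    ?_, ?_, ?_, ?_, ?_⟩
  · intro i j hi hj hvv
    exact mod_add_cancel hi hj (hv _ _ (Nat.mod_lt _ hk) (Nat.mod_lt _ hk) hvv)
  · intro i j hi hj hvv
    exact mod_add_cancel hi hj (ha _ _ (Nat.mod_lt _ hk) (Nat.mod_lt _ hk) hvv)
  · intro i hi
    refine ⟨(harc _ (Nat.mod_lt _ hk)).1, ?_⟩
    rw [(harc _ (Nat.mod_lt _ hk)).2]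
    have : ((i + (i0 + 1) % k) % k + 1) % k = ((i + 1) % k + (i0 + 1) % k) % k := by
      rw [Nat.mod_add_mod, Nat.mod_add_mod, Nat.add_right_comm]
    rw [this]
  · exact hC.trans (image_rot a k ((i0 + 1) % k)).symm
  · have h2 : (k - 1 + (i0 + 1) % k) % k = i0 := by
      rw [Nat.add_mod_mod]
      have h3 : k - 1 + (i0 + 1) = k + i0 := by omega
      rw [h3, Nat.add_mod_left]
      exact Nat.mod_eq_of_lt hi0
    show a ((k - 1 + (i0 + 1) % k) % k) = x
    rw [h2, hax]

/-! ### Congruence lemmas -/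

lemma kcF_congr {D D' : MDigraph} {F : Finset ℕ}
    (hA : ∀ x ∈ F, (x ∈ D.A ↔ x ∈ D'.A))
    (hE : ∀ x ∈ F, D'.ends x = D.ends x) : kcF D F = kcF D' F := by
  unfold kcF
  congr 1
  apply Finset.filter_congr
  intro C hC
  rw [Finset.mem_powerset] at hC
  constructor
  · rintro ⟨k, hk⟩
    exact ⟨k, isCycle_mono (fun x hx h => (hA x (hC hx)).mp h) (fun x hx => hE x (hC hx)) hk⟩
  · rintro ⟨k, hk⟩
    exact ⟨k, isCycle_mono (fun x hx h => (hA x (hC hx)).mpr h)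
      (fun x hx => (hE x (hC hx)).symm) hk⟩

lemma kpF_congr {D D' : MDigraph} {F : Finset ℕ}
    (hE : ∀ x ∈ F, D'.ends x = D.ends x) : kpF D F = kpF D' F := by
  unfold kpF
  have h1 : F.image (fun a => (D.ends a).1) = F.image (fun a => (D'.ends a).1) :=
    Finset.image_congr fun x hx => by rw [hE x hx]
  have h2 : ∀ w, F.filter (fun a => (D.ends a).2 = w) = F.filter (fun a => (D'.ends a).2 = w) :=
    fun w => Finset.filter_congr fun x hx => by rw [hE x hx]
  rw [h1]
  congr 1
  apply Finset.filter_congr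
  intro w _
  rw [h2 w]

lemma degOK_congr {D D' : MDigraph} {F : Finset ℕ}
    (hE : ∀ x ∈ F, D'.ends x = D.ends x) : DegOK D F ↔ DegOK D' F := by
  unfold DegOK
  have h1 : ∀ w, F.filter (fun a => (D.ends a).1 = w) = F.filter (fun a => (D'.ends a).1 = w) :=
    fun w => Finset.filter_congr fun x hx => by rw [hE x hx]
  have h2 : ∀ w, F.filter (fun a => (D.ends a).2 = w) = F.filter (fun a => (D'.ends a).2 = w) :=
    fun w => Finset.filter_congr fun x hx => by rw [hE x hx]
  constructor <;> intro h w
  · rw [← h1 w, ← h2 w]; exact h w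
  · rw [h1 w, h2 w]; exact h w

lemma degOK_subset {D : MDigraph} {F F' : Finset ℕ} (h : DegOK D F) (hsub : F' ⊆ F) :
    DegOK D F' :=
  fun w => ⟨le_trans (Finset.card_le_card (Finset.filter_subset_filter _ hsub)) (h w).1,
    le_trans (Finset.card_le_card (Finset.filter_subset_filter _ hsub)) (h w).2⟩

lemma degOK_unique_tail {D : MDigraph} {F : Finset ℕ} (h : DegOK D F) {a b w : ℕ}
    (ha : a ∈ F) (hb : b ∈ F) (h1 : (D.ends a).1 = w) (h2 : (D.ends b).1 = w) : a = b :=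
  Finset.card_le_one.mp (h w).1 a (Finset.mem_filter.mpr ⟨ha, h1⟩)
    b (Finset.mem_filter.mpr ⟨hb, h2⟩)

lemma degOK_unique_head {D : MDigraph} {F : Finset ℕ} (h : DegOK D F) {a b w : ℕ}
    (ha : a ∈ F) (hb : b ∈ F) (h1 : (D.ends a).2 = w) (h2 : (D.ends b).2 = w) : a = b :=
  Finset.card_le_one.mp (h w).2 a (Finset.mem_filter.mpr ⟨ha, h1⟩)
    b (Finset.mem_filter.mpr ⟨hb, h2⟩)

/-! ### The empty case -/

lemma kcF_empty (D : MDigraph) : kcF D ∅ = 0 := by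
  unfold kcF
  rw [Finset.card_eq_zero, Finset.filter_eq_empty_iff]
  intro C hC
  rw [Finset.powerset_empty, Finset.mem_singleton] at hC
  subst hC
  rintro ⟨k, hk⟩
  exact absurd hk.nonempty (by simp)

lemma kpF_empty (D : MDigraph) : kpF D ∅ = 0 := by
  unfold kpF
  simp

lemma triPoly_of_empty (D' : MDigraph) (h : D'.A = ∅) : D'.triPoly = 1 := by
  unfold triPoly
  rw [h, Finset.powerset_empty]
  have hdeg : DegOK D' ∅ := fun w => by simp [Finset.filter_empty]
  rw [Finset.filter_singleton, if_pos hdeg, Finset.sum_singleton, kcF_empty, kpF_empty]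
  simp


/-! ### Unfolding contraction / extraction -/

lemma contract_loop_A {D : MDigraph} {e : ℕ} (hl : D.IsLoop e) :
    (D.contractArc e).A =
      D.A.filter (fun a => (D.ends a).1 ≠ (D.ends e).1 ∧ (D.ends a).2 ≠ (D.ends e).1) := by
  have hcond : (D.ends e).1 = (D.ends e).2 := hl
  unfold contractArc
  simp only []
  rw [if_pos hcond]

lemma contract_loop_ends {D : MDigraph} {e : ℕ} (hl : D.IsLoop e) :
    (D.contractArc e).ends = D.ends := by
  have hcond : (D.ends e).1 = (D.ends e).2 := hl
  unfold contractArc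
  simp only []
  rw [if_pos hcond]

lemma contract_nonloop_A {D : MDigraph} {e : ℕ} (hne : ¬ D.IsLoop e) :
    (D.contractArc e).A =
      D.A.filter (fun a => (D.ends a).1 ≠ (D.ends e).1 ∧ (D.ends a).2 ≠ (D.ends e).2) := by
  have hcond : ¬ (D.ends e).1 = (D.ends e).2 := hne
  unfold contractArc
  simp only []
  rw [if_neg hcond]

lemma contract_nonloop_ends {D : MDigraph} {e : ℕ} (hne : ¬ D.IsLoop e) :
    (D.contractArc e).ends = fun a =>
      ((if (D.ends a).1 = (D.ends e).2 then (D.ends e).1 else (D.ends a).1),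
       (if (D.ends a).2 = (D.ends e).2 then (D.ends e).1 else (D.ends a).2)) := by
  have hcond : ¬ (D.ends e).1 = (D.ends e).2 := hne
  unfold contractArc
  simp only []
  rw [if_neg hcond]

lemma extract_A (D : MDigraph) (e : ℕ) :
    (D.extractArc e).A = D.A.filter (fun a =>
      (D.ends a).1 ≠ (D.ends e).1 ∧ (D.ends a).1 ≠ (D.ends e).2 ∧
      (D.ends a).2 ≠ (D.ends e).1 ∧ (D.ends a).2 ≠ (D.ends e).2) := rfl

lemma extract_ends (D : MDigraph) (e : ℕ) : (D.extractArc e).ends = D.ends := rfl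

lemma delArc_ends (D : MDigraph) (e : ℕ) : (D.delArc e).ends = D.ends := rfl
lemma delArc_A (D : MDigraph) (e : ℕ) : (D.delArc e).A = D.A.erase e := rfl

/-! ### Loop case -/

lemma cycle_of_loop {D : MDigraph} {e : ℕ} (hl : D.IsLoop e) {C : Finset ℕ} {k : ℕ}
    (h : IsCycle D C k) (heC : e ∈ C) : C = {e} := by
  obtain ⟨hk, v, a, hv, ha, harc, hC⟩ := h
  rw [hC] at heC
  simp only [Finset.mem_image, Finset.mem_range] at heC
  obtain ⟨i0, hi0, hae⟩ := heC
  have h2 := (harc i0 hi0).2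
  rw [hae] at h2
  have hvv : v i0 = v ((i0 + 1) % k) := by
    have hl' : (D.ends e).1 = (D.ends e).2 := hl
    rw [h2] at hl'
    exact hl'
  have hmlt : (i0 + 1) % k < k := Nat.mod_lt _ hk
  have hi0eq := hv _ _ hi0 hmlt hvv
  have hk1 : k = 1 := by
    by_contra hnk
    have hk2 : 2 ≤ k := by omega
    rcases Nat.lt_or_ge (i0 + 1) k with hlt | hge
    · rw [Nat.mod_eq_of_lt hlt] at hi0eq; omega
    · have h3 : i0 + 1 = k := by omega
      rw [h3, Nat.mod_self] at hi0eq; omega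
  subst hk1
  have hi00 : i0 = 0 := by omega
  subst hi00
  rw [hC, Finset.range_one, Finset.image_singleton, hae]

lemma isCycle_singleton_loop {D : MDigraph} {e : ℕ} (he : e ∈ D.A) (hl : D.IsLoop e) :
    IsCycle D {e} 1 := by
  refine ⟨le_refl 1, fun _ => (D.ends e).1, fun _ => e, ?_, ?_, ?_, ?_⟩
  · intro i j hi hj _; omega
  · intro i j hi hj _; omega
  · intro i _
    refine ⟨he, ?_⟩
    have hl' : (D.ends e).1 = (D.ends e).2 := hl
    show D.ends e = ((D.ends e).1, (D.ends e).1)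
    exact Prod.ext_iff.mpr ⟨rfl, hl'.symm⟩
  · rw [Finset.range_one, Finset.image_singleton]

lemma kcF_insert_loop {D : MDigraph} {e : ℕ} (he : e ∈ D.A) (hl : D.IsLoop e)
    {F' : Finset ℕ} (heF : e ∉ F') :
    kcF D (insert e F') = kcF D F' + 1 := by
  unfold kcF
  have hset : (insert e F').powerset.filter (fun C => ∃ k, IsCycle D C k)
      = insert {e} (F'.powerset.filter (fun C => ∃ k, IsCycle D C k)) := by
    ext C
    simp only [Finset.mem_filter, Finset.mem_powerset, Finset.mem_insert]
    constructor
    · rintro ⟨hsub, k, hcyc⟩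
      by_cases heC : e ∈ C
      · exact Or.inl (cycle_of_loop hl hcyc heC)
      · exact Or.inr ⟨fun x hx =>
          (Finset.mem_insert.mp (hsub hx)).resolve_left (fun hxe => heC (hxe ▸ hx)),
          k, hcyc⟩
    · rintro (rfl | ⟨hsub, hcyc⟩)
      · exact ⟨by simp [Finset.singleton_subset_iff], 1, isCycle_singleton_loop he hl⟩
      · exact ⟨hsub.trans (Finset.subset_insert _ _), hcyc⟩
  rw [hset, Finset.card_insert_of_notMem]
  intro hmem
  have hsub : ({e} : Finset ℕ) ⊆ F' := Finset.mem_powerset.mp (Finset.mem_filter.mp hmem).1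
  exact heF (hsub (Finset.mem_singleton_self e))

lemma kpF_insert_loop {D : MDigraph} {e : ℕ} (hl : D.IsLoop e)
    {F' : Finset ℕ}
    (hF' : ∀ a ∈ F', (D.ends a).1 ≠ (D.ends e).1 ∧ (D.ends a).2 ≠ (D.ends e).1) :
    kpF D (insert e F') = kpF D F' := by
  unfold kpF
  congr 1
  ext w
  have hl' : (D.ends e).2 = (D.ends e).1 := hl.symm
  constructor
  · intro hw
    obtain ⟨hw1, hw2⟩ := Finset.mem_filter.mp hw
    obtain ⟨a, ha, hta⟩ := Finset.mem_image.mp hw1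
    rw [Finset.card_eq_zero, Finset.filter_eq_empty_iff] at hw2
    rcases Finset.mem_insert.mp ha with rfl | haF
    · exact absurd (hl'.trans hta) (hw2 (Finset.mem_insert_self _ F'))
    · refine Finset.mem_filter.mpr ⟨Finset.mem_image.mpr ⟨a, haF, hta⟩, ?_⟩
      rw [Finset.card_eq_zero, Finset.filter_eq_empty_iff]
      exact fun b hb => hw2 (Finset.mem_insert_of_mem hb)
  · intro hw
    obtain ⟨hw1, hw2⟩ := Finset.mem_filter.mp hw
    obtain ⟨a, haF, hta⟩ := Finset.mem_image.mp hw1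
    rw [Finset.card_eq_zero, Finset.filter_eq_empty_iff] at hw2
    refine Finset.mem_filter.mpr
      ⟨Finset.mem_image.mpr ⟨a, Finset.mem_insert_of_mem haF, hta⟩, ?_⟩
    rw [Finset.card_eq_zero, Finset.filter_eq_empty_iff]
    intro b hb
    rcases Finset.mem_insert.mp hb with rfl | hbF
    · intro hww
      exact (hF' a haF).1 (hta.trans (hww.symm.trans hl'))
    · exact hw2 hbF

/-! ### Non-loop case : cycles -/

lemma mem_contract_A {D : MDigraph} {e : ℕ} {a : ℕ} (hne : ¬ D.IsLoop e) :
    a ∈ (D.contractArc e).A ↔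
      a ∈ D.A ∧ (D.ends a).1 ≠ (D.ends e).1 ∧ (D.ends a).2 ≠ (D.ends e).2 := by
  rw [contract_nonloop_A hne, Finset.mem_filter]

lemma contract_ends_apply {D : MDigraph} {e : ℕ} (hne : ¬ D.IsLoop e) (a : ℕ) :
    (D.contractArc e).ends a =
      ((if (D.ends a).1 = (D.ends e).2 then (D.ends e).1 else (D.ends a).1),
       (if (D.ends a).2 = (D.ends e).2 then (D.ends e).1 else (D.ends a).2)) := by
  rw [contract_nonloop_ends hne]

lemma contract_ends_eq {D : MDigraph} {e : ℕ} {a : ℕ} (hne : ¬ D.IsLoop e)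
    (h1 : (D.ends a).1 ≠ (D.ends e).2) (h2 : (D.ends a).2 ≠ (D.ends e).2) :
    (D.contractArc e).ends a = D.ends a := by
  rw [contract_ends_apply hne, if_neg h1, if_neg h2]

/-- all arcs of a cycle inside the contracted arc set avoid `u` as head and
`v` as tail (in `D`). -/
lemma cycle_avoid {D : MDigraph} {e : ℕ} {F' C : Finset ℕ} {k : ℕ}
    (hF' : ∀ a ∈ F', (D.ends a).1 ≠ (D.ends e).1 ∧ (D.ends a).2 ≠ (D.ends e).2)
    (hsub : C ⊆ F') (hcyc : IsCycle D C k) :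
    ∀ x ∈ C, (D.ends x).2 ≠ (D.ends e).1 ∧ (D.ends x).1 ≠ (D.ends e).2 := by
  obtain ⟨hk, vv, aa, hvv, haa, harc, hC⟩ := hcyc
  intro x hxC
  have hmem : ∀ i, i < k → aa i ∈ F' := fun i hi => hsub (by
    rw [hC]; exact Finset.mem_image_of_mem _ (Finset.mem_range.mpr hi))
  rw [hC] at hxC
  simp only [Finset.mem_image, Finset.mem_range] at hxC
  obtain ⟨i, hik, rfl⟩ := hxC
  constructor
  · intro hhead
    have hm : (i + 1) % k < k := Nat.mod_lt _ hk
    have h1 : vv ((i + 1) % k) = (D.ends e).1 := by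
      have h2 := (harc i hik).2
      have : (D.ends (aa i)).2 = vv ((i + 1) % k) := by rw [h2]
      rw [← this]; exact hhead
    have h2 : (D.ends (aa ((i + 1) % k))).1 = (D.ends e).1 := by
      rw [(harc _ hm).2]; exact h1
    exact (hF' _ (hmem _ hm)).1 h2
  · intro htail
    have hjk : (i + k - 1) % k < k := Nat.mod_lt _ hk
    have hji : ((i + k - 1) % k + 1) % k = i := prev_succ_mod hk hik
    have h1 : (D.ends (aa ((i + k - 1) % k))).2 = vv i := by
      rw [(harc _ hjk).2]
      show vv (((i + k - 1) % k + 1) % k) = vv i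
      rw [hji]
    have h2 : (D.ends (aa ((i + k - 1) % k))).2 = (D.ends e).2 := by
      rw [h1]
      have : (D.ends (aa i)).1 = vv i := by rw [(harc i hik).2]
      rw [← this]; exact htail
    exact (hF' _ (hmem _ hjk)).2 h2

/-- KEY2 : a `D`-cycle inside `F'` is a cycle of the contraction, and is untouched. -/
lemma key2 {D : MDigraph} {e : ℕ} (hne : ¬ D.IsLoop e) {F' C : Finset ℕ} {k : ℕ}
    (hF' : F' ⊆ (D.contractArc e).A)
    (hsub : C ⊆ F') (hcyc : IsCycle D C k) :
    IsCycle (D.contractArc e) C k ∧ ¬ ∃ a ∈ C, (D.ends a).2 = (D.ends e).1 := by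
  have hF'' : ∀ a ∈ F', a ∈ D.A ∧ (D.ends a).1 ≠ (D.ends e).1 ∧ (D.ends a).2 ≠ (D.ends e).2 :=
    fun a ha => (mem_contract_A hne).mp (hF' ha)
  have havoid := cycle_avoid (fun a ha => ⟨(hF'' a ha).2.1, (hF'' a ha).2.2⟩) hsub hcyc
  constructor
  · refine isCycle_mono (fun x hx _ => hF' (hsub hx)) (fun x hx => ?_) hcyc
    exact contract_ends_eq hne (havoid x hx).2 (hF'' x (hsub hx)).2.2
  · rintro ⟨a, haC, hhead⟩
    exact (havoid a haC).1 hhead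

/-- KEY3 : an untouched cycle of the contraction is a `D`-cycle. -/
lemma key3 {D : MDigraph} {e : ℕ} (hne : ¬ D.IsLoop e) {F' C' : Finset ℕ} {k : ℕ}
    (hF' : F' ⊆ (D.contractArc e).A)
    (hsub : C' ⊆ F') (hcyc : IsCycle (D.contractArc e) C' k)
    (hnt : ¬ ∃ a ∈ C', (D.ends a).2 = (D.ends e).1) :
    IsCycle D C' k := by
  have hF'' : ∀ a ∈ F', a ∈ D.A ∧ (D.ends a).1 ≠ (D.ends e).1 ∧ (D.ends a).2 ≠ (D.ends e).2 :=
    fun a ha => (mem_contract_A hne).mp (hF' ha)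
  push_neg at hnt
  -- first : no arc of C' has D-tail = v
  have htail : ∀ x ∈ C', (D.ends x).1 ≠ (D.ends e).2 := by
    obtain ⟨hk, ww, bb, hww, hbb, hbarc, hC'⟩ := hcyc
    intro x hxC htl
    have hmem : ∀ i, i < k → bb i ∈ C' := fun i hi => by
      rw [hC']; exact Finset.mem_image_of_mem _ (Finset.mem_range.mpr hi)
    rw [hC'] at hxC
    simp only [Finset.mem_image, Finset.mem_range] at hxC
    obtain ⟨i, hik, rfl⟩ := hxC
    -- contract-tail of bb i is u, so ww i = u
    have h1 : ((D.contractArc e).ends (bb i)).1 = (D.ends e).1 := by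
      rw [contract_ends_apply hne]
      simp only [if_pos htl]
    have hwi : ww i = (D.ends e).1 := by
      have := (hbarc i hik).2
      have h2 : ((D.contractArc e).ends (bb i)).1 = ww i := by rw [this]
      rw [← h2, h1]
    -- the previous arc has contract-head u, hence D-head u : contradiction
    have hjk : (i + k - 1) % k < k := Nat.mod_lt _ hk
    have hji : ((i + k - 1) % k + 1) % k = i := prev_succ_mod hk hik
    have h3 : ((D.contractArc e).ends (bb ((i + k - 1) % k))).2 = (D.ends e).1 := by
      rw [(hbarc _ hjk).2]
      show ww (((i + k - 1) % k + 1) % k) = (D.ends e).1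
      rw [hji, hwi]
    have h4 : (D.ends (bb ((i + k - 1) % k))).2 = (D.ends e).1 := by
      rw [contract_ends_apply hne] at h3
      by_cases hc : (D.ends (bb ((i + k - 1) % k))).2 = (D.ends e).2
      · exfalso
        exact (hF'' _ (hsub (hmem _ hjk))).2.2 hc
      · rw [if_neg hc] at h3; exact h3
    exact hnt _ (hmem _ hjk) h4
  refine isCycle_mono (fun x hx h => (hF'' x (hsub hx)).1) (fun x hx => ?_) hcyc
  exact (contract_ends_eq hne (htail x hx) (hF'' x (hsub hx)).2.2).symm

/-- KEY1 : contracting a `D`-cycle through `e`. -/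
lemma key1 {D : MDigraph} {e : ℕ} (hne : ¬ D.IsLoop e) {F' C : Finset ℕ} {k : ℕ}
    (hF' : F' ⊆ (D.contractArc e).A)
    (hsub : C ⊆ insert e F') (hcyc : IsCycle D C k) (heC : e ∈ C) :
    IsCycle (D.contractArc e) (C.erase e) (k - 1) := by
  have hne' : (D.ends e).1 ≠ (D.ends e).2 := hne
  have hk1 : 1 ≤ k := hcyc.1
  obtain ⟨vv, aa, hvv, haa, harc, hC, hlast⟩ := hcyc.rot heC
  have hk2 : 2 ≤ k := by
    by_contra hcon
    have hkeq : k = 1 := by omega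
    subst hkeq
    have h0 := (harc 0 (by omega)).2
    rw [show (0 : ℕ) - 1 = 0 from rfl] at hlast
    rw [hlast] at h0
    exact hne' (by rw [h0])
  have hu : (D.ends e).1 = vv (k - 1) := by
    have h := (harc (k - 1) (by omega)).2
    rw [hlast] at h
    rw [h]
  have hv : (D.ends e).2 = vv 0 := by
    have h := (harc (k - 1) (by omega)).2
    rw [hlast] at h
    have h2 : (k - 1 + 1) % k = 0 := by
      have : k - 1 + 1 = k := by omega
      rw [this, Nat.mod_self]
    rw [h2] at h
    rw [h]
  have hmemC : ∀ i, i < k → aa i ∈ C := fun i hi => by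
    rw [hC]; exact Finset.mem_image_of_mem _ (Finset.mem_range.mpr hi)
  have hneq : ∀ i, i < k - 1 → aa i ≠ e := by
    intro i hi h
    have := haa i (k - 1) (by omega) (by omega) (h.trans hlast.symm)
    omega
  have hmemF : ∀ i, i < k - 1 → aa i ∈ F' := fun i hi =>
    (Finset.mem_insert.mp (hsub (hmemC i (by omega)))).resolve_left (hneq i hi)
  refine ⟨by omega, fun i => if i = 0 then vv (k - 1) else vv i, aa, ?_, ?_, ?_, ?_⟩
  · intro i j hi hj hij
    have hij' : (if i = 0 then vv (k - 1) else vv i) = (if j = 0 then vv (k - 1) else vv j) := hij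
    by_cases hi0 : i = 0 <;> by_cases hj0 : j = 0
    · omega
    · rw [if_pos hi0, if_neg hj0] at hij'
      have := hvv _ _ (by omega) (by omega) hij'; omega
    · rw [if_neg hi0, if_pos hj0] at hij'
      have := hvv _ _ (by omega) (by omega) hij'; omega
    · rw [if_neg hi0, if_neg hj0] at hij'
      exact hvv _ _ (by omega) (by omega) hij'
  · intro i j hi hj hij
    exact haa i j (by omega) (by omega) hij
  · intro i hi
    refine ⟨hF' (hmemF i hi), ?_⟩
    have hDi : D.ends (aa i) = (vv i, vv (i + 1)) := by
      have h := (harc i (by omega)).2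
      rwa [Nat.mod_eq_of_lt (by omega : i + 1 < k)] at h
    rw [contract_ends_apply hne, hDi]
    simp only [Prod.mk.injEq]
    constructor
    · by_cases hi0 : i = 0
      · subst hi0
        rw [if_pos (by rw [hv]), if_pos rfl, hu]
      · rw [if_neg (by
          rw [hv]
          intro hcon
          exact hi0 (hvv i 0 (by omega) (by omega) hcon)), if_neg hi0]
    · rw [if_neg (by
        rw [hv]
        intro hcon
        have := hvv (i + 1) 0 (by omega) (by omega) hcon
        omega)]
      by_cases hik : i + 1 < k - 1
      · rw [Nat.mod_eq_of_lt hik, if_neg (by omega)]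
      · have h1 : i + 1 = k - 1 := by omega
        rw [h1, Nat.mod_self, if_pos rfl]
  · ext x
    rw [Finset.mem_erase, hC]
    simp only [Finset.mem_image, Finset.mem_range]
    constructor
    · rintro ⟨hxe, i, hik, rfl⟩
      refine ⟨i, ?_, rfl⟩
      rcases Nat.lt_or_ge i (k - 1) with h | h
      · exact h
      · exfalso; exact hxe (by rw [show i = k - 1 by omega, hlast])
    · rintro ⟨i, hik, rfl⟩
      exact ⟨hneq i hik, i, by omega, rfl⟩

/-- KEY5 : the erase of a `D`-cycle through `e` is touched. -/
lemma key5 {D : MDigraph} {e : ℕ} (hne : ¬ D.IsLoop e) {C : Finset ℕ} {k : ℕ}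
    (hcyc : IsCycle D C k) (heC : e ∈ C) :
    ∃ a ∈ C.erase e, (D.ends a).2 = (D.ends e).1 := by
  have hne' : (D.ends e).1 ≠ (D.ends e).2 := hne
  have hk1 : 1 ≤ k := hcyc.1
  obtain ⟨vv, aa, hvv, haa, harc, hC, hlast⟩ := hcyc.rot heC
  have hk2 : 2 ≤ k := by
    by_contra hcon
    have hkeq : k = 1 := by omega
    subst hkeq
    have h0 := (harc 0 (by omega)).2
    rw [show (0 : ℕ) - 1 = 0 from rfl] at hlast
    rw [hlast] at h0
    exact hne' (by rw [h0])
  have hu : (D.ends e).1 = vv (k - 1) := by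
    have h := (harc (k - 1) (by omega)).2
    rw [hlast] at h
    rw [h]
  refine ⟨aa (k - 2), Finset.mem_erase.mpr ⟨?_, ?_⟩, ?_⟩
  · intro h
    have := haa (k - 2) (k - 1) (by omega) (by omega) (h.trans hlast.symm)
    omega
  · rw [hC]; exact Finset.mem_image_of_mem _ (Finset.mem_range.mpr (by omega))
  · have h := (harc (k - 2) (by omega)).2
    have h2 : (k - 2 + 1) % k = k - 1 := by
      rw [Nat.mod_eq_of_lt (by omega)]
      omega
    rw [h2] at h
    rw [h, hu]

/-- KEY4 : a touched cycle of the contraction extends by `e` to a `D`-cycle. -/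
lemma key4 {D : MDigraph} {e : ℕ} (he : e ∈ D.A) (hne : ¬ D.IsLoop e)
    {F' C' : Finset ℕ} {k : ℕ}
    (hF' : F' ⊆ (D.contractArc e).A)
    (hsub : C' ⊆ F') (hcyc : IsCycle (D.contractArc e) C' k)
    (ht : ∃ a ∈ C', (D.ends a).2 = (D.ends e).1) :
    IsCycle D (insert e C') (k + 1) := by
  have hne' : (D.ends e).1 ≠ (D.ends e).2 := hne
  have hF'' : ∀ a ∈ F', a ∈ D.A ∧ (D.ends a).1 ≠ (D.ends e).1 ∧ (D.ends a).2 ≠ (D.ends e).2 :=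
    fun a ha => (mem_contract_A hne).mp (hF' ha)
  have heF : e ∉ F' := fun h => (hF'' e h).2.1 rfl
  have hk1 : 1 ≤ k := hcyc.1
  obtain ⟨x0, hx0C, hx0h⟩ := ht
  obtain ⟨ww, bb, hww, hbb, hbarc, hC', hlast⟩ := hcyc.rot hx0C
  have hmemC : ∀ i, i < k → bb i ∈ C' := fun i hi => by
    rw [hC']; exact Finset.mem_image_of_mem _ (Finset.mem_range.mpr hi)
  have hmemF : ∀ i, i < k → bb i ∈ F' := fun i hi => hsub (hmemC i hi)
  have hw0 : ww 0 = (D.ends e).1 := by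
    have h := (hbarc (k - 1) (by omega)).2
    have h2 : (k - 1 + 1) % k = 0 := by
      rw [show k - 1 + 1 = k by omega, Nat.mod_self]
    rw [h2, hlast] at h
    have h3 : ((D.contractArc e).ends x0).2 = ww 0 := by rw [h]
    rw [← h3, contract_ends_apply hne]
    show (if (D.ends x0).2 = (D.ends e).2 then (D.ends e).1 else (D.ends x0).2) = (D.ends e).1
    rw [hx0h, if_neg (fun hc => hne' hc)]
  have hDhead : ∀ i, i < k → (D.ends (bb i)).2 = ww ((i + 1) % k) := by
    intro i hi
    have h := (hbarc i hi).2
    have h2 : ((D.contractArc e).ends (bb i)).2 = ww ((i + 1) % k) := by rw [h]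
    rw [contract_ends_apply hne] at h2
    rw [← h2]
    show (D.ends (bb i)).2 = (if (D.ends (bb i)).2 = (D.ends e).2 then (D.ends e).1 else (D.ends (bb i)).2)
    rw [if_neg (hF'' _ (hmemF i hi)).2.2]
  have hCtail : ∀ i, i < k →
      (if (D.ends (bb i)).1 = (D.ends e).2 then (D.ends e).1 else (D.ends (bb i)).1) = ww i := by
    intro i hi
    have h := (hbarc i hi).2
    have h2 : ((D.contractArc e).ends (bb i)).1 = ww i := by rw [h]
    rw [contract_ends_apply hne] at h2
    exact h2
  have hwnv : ∀ i, i < k → ww i ≠ (D.ends e).2 := by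
    intro i hi
    rw [← hCtail i hi]
    by_cases hc : (D.ends (bb i)).1 = (D.ends e).2
    · rw [if_pos hc]; exact hne'
    · rw [if_neg hc]; exact hc
  have hDtail0 : (D.ends (bb 0)).1 = (D.ends e).2 := by
    have h := hCtail 0 (by omega)
    rw [hw0] at h
    by_cases hc : (D.ends (bb 0)).1 = (D.ends e).2
    · exact hc
    · exfalso
      rw [if_neg hc] at h
      exact (hF'' _ (hmemF 0 (by omega))).2.1 h
  have hDtail : ∀ i, 1 ≤ i → i < k → (D.ends (bb i)).1 = ww i := by
    intro i h1 hi
    have h := hCtail i hi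
    by_cases hc : (D.ends (bb i)).1 = (D.ends e).2
    · exfalso
      rw [if_pos hc] at h
      have : i = 0 := hww i 0 hi (by omega) (by rw [← h, hw0])
      omega
    · rw [if_neg hc] at h; exact h
  have hunw : ∀ m, 1 ≤ m → m < k → (D.ends e).1 ≠ ww m := by
    intro m h1 hm hcon
    have : 0 = m := hww 0 m (by omega) hm (by rw [hw0, hcon])
    omega
  refine ⟨by omega,
    fun i => if i = 0 then (D.ends e).1 else if i = 1 then (D.ends e).2 else ww (i - 1),
    fun i => if i = 0 then e else bb (i - 1), ?_, ?_, ?_, ?_⟩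
  · -- vertex injectivity
    intro i j hi hj hij
    have hij' : (if i = 0 then (D.ends e).1 else if i = 1 then (D.ends e).2 else ww (i - 1))
        = (if j = 0 then (D.ends e).1 else if j = 1 then (D.ends e).2 else ww (j - 1)) := hij
    by_cases hi0 : i = 0
    · by_cases hj0 : j = 0
      · omega
      · by_cases hj1 : j = 1
        · rw [if_pos hi0, if_neg hj0, if_pos hj1] at hij'
          exact absurd hij' hne'
        · rw [if_pos hi0, if_neg hj0, if_neg hj1] at hij'
          exact absurd hij' (hunw (j - 1) (by omega) (by omega))
    · by_cases hi1 : i = 1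
      · by_cases hj0 : j = 0
        · rw [if_neg hi0, if_pos hi1, if_pos hj0] at hij'
          exact absurd hij'.symm hne'
        · by_cases hj1 : j = 1
          · omega
          · rw [if_neg hi0, if_pos hi1, if_neg hj0, if_neg hj1] at hij'
            exact absurd hij'.symm (hwnv (j - 1) (by omega))
      · by_cases hj0 : j = 0
        · rw [if_neg hi0, if_neg hi1, if_pos hj0] at hij'
          exact absurd hij'.symm (hunw (i - 1) (by omega) (by omega))
        · by_cases hj1 : j = 1
          · rw [if_neg hi0, if_neg hi1, if_neg hj0, if_pos hj1] at hij'
            exact absurd hij' (hwnv (i - 1) (by omega))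
          · rw [if_neg hi0, if_neg hi1, if_neg hj0, if_neg hj1] at hij'
            have := hww (i - 1) (j - 1) (by omega) (by omega) hij'
            omega
  · -- arc injectivity
    intro i j hi hj hij
    have hij' : (if i = 0 then e else bb (i - 1)) = (if j = 0 then e else bb (j - 1)) := hij
    by_cases hi0 : i = 0
    · by_cases hj0 : j = 0
      · omega
      · rw [if_pos hi0, if_neg hj0] at hij'
        exact absurd (by rw [hij']; exact hmemF (j - 1) (by omega)) heF
    · by_cases hj0 : j = 0
      · rw [if_neg hi0, if_pos hj0] at hij'
        exact absurd (by rw [← hij']; exact hmemF (i - 1) (by omega)) heF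
      · rw [if_neg hi0, if_neg hj0] at hij'
        have := hbb (i - 1) (j - 1) (by omega) (by omega) hij'
        omega
  · -- arcs
    intro i hi
    show (if i = 0 then e else bb (i - 1)) ∈ D.A ∧
      D.ends (if i = 0 then e else bb (i - 1)) =
        ((if i = 0 then (D.ends e).1 else if i = 1 then (D.ends e).2 else ww (i - 1)),
         (if (i + 1) % (k + 1) = 0 then (D.ends e).1
          else if (i + 1) % (k + 1) = 1 then (D.ends e).2 else ww ((i + 1) % (k + 1) - 1)))
    by_cases hi0 : i = 0
    · subst hi0
      have hm : (0 + 1) % (k + 1) = 1 := Nat.mod_eq_of_lt (by omega)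
      rw [hm, if_pos rfl, if_pos rfl, if_neg one_ne_zero, if_pos rfl]
      exact ⟨he, rfl⟩
    · rw [if_neg hi0]
      refine ⟨(hF'' _ (hmemF (i - 1) (by omega))).1, ?_⟩
      have h1 : (D.ends (bb (i - 1))).1 =
          (if i = 0 then (D.ends e).1 else if i = 1 then (D.ends e).2 else ww (i - 1)) := by
        by_cases hi1 : i = 1
        · rw [if_neg hi0, if_pos hi1, hi1]
          exact hDtail0
        · rw [if_neg hi0, if_neg hi1]
          exact hDtail (i - 1) (by omega) (by omega)
      have hh := hDhead (i - 1) (by omega)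
      rw [show i - 1 + 1 = i by omega] at hh
      have h2 : (D.ends (bb (i - 1))).2 =
          (if (i + 1) % (k + 1) = 0 then (D.ends e).1
           else if (i + 1) % (k + 1) = 1 then (D.ends e).2 else ww ((i + 1) % (k + 1) - 1)) := by
        by_cases hik : i < k
        · rw [Nat.mod_eq_of_lt hik] at hh
          have hm : (i + 1) % (k + 1) = i + 1 := Nat.mod_eq_of_lt (by omega)
          rw [hm, if_neg (by omega), if_neg (by omega), show i + 1 - 1 = i by omega]
          exact hh
        · have hik' : i = k := by omega
          subst hik'
          rw [Nat.mod_self] at hh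
          rw [Nat.mod_self, if_pos rfl, hh, hw0]
      exact Prod.ext_iff.mpr ⟨h1, h2⟩
  · -- image
    ext x
    simp only [Finset.mem_insert, Finset.mem_image, Finset.mem_range]
    constructor
    · rintro (rfl | hxC)
      · exact ⟨0, by omega, by rw [if_pos rfl]⟩
      · rw [hC'] at hxC
        simp only [Finset.mem_image, Finset.mem_range] at hxC
        obtain ⟨m, hm, rfl⟩ := hxC
        refine ⟨m + 1, by omega, ?_⟩
        show (if m + 1 = 0 then e else bb (m + 1 - 1)) = bb m
        rw [if_neg (by omega), show m + 1 - 1 = m by omega]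
    · rintro ⟨i, hi, rfl⟩
      by_cases hi0 : i = 0
      · left
        show (if i = 0 then e else bb (i - 1)) = e
        rw [if_pos hi0]
      · right
        show (if i = 0 then e else bb (i - 1)) ∈ C'
        rw [if_neg hi0]
        exact hmemC (i - 1) (by omega)

/-- Non-loop cycle-count transfer. -/
lemma kcF_insert_nonloop {D : MDigraph} {e : ℕ} (he : e ∈ D.A) (hne : ¬ D.IsLoop e)
    {F' : Finset ℕ} (hF' : F' ⊆ (D.contractArc e).A) :
    kcF D (insert e F') = kcF (D.contractArc e) F' := by
  have hF'' : ∀ a ∈ F', a ∈ D.A ∧ (D.ends a).1 ≠ (D.ends e).1 ∧ (D.ends a).2 ≠ (D.ends e).2 :=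
    fun a ha => (mem_contract_A hne).mp (hF' ha)
  have heF : e ∉ F' := fun h => (hF'' e h).2.1 rfl
  unfold kcF
  refine Finset.card_bij' (fun C _ => C.erase e)
    (fun C' _ => if ∃ a ∈ C', (D.ends a).2 = (D.ends e).1 then insert e C' else C')
    ?_ ?_ ?_ ?_
  · -- maps into
    intro C hC
    show C.erase e ∈ Finset.filter (fun C => ∃ k, IsCycle (D.contractArc e) C k) F'.powerset
    rw [Finset.mem_filter, Finset.mem_powerset] at hC
    obtain ⟨hCsub, k, hcyc⟩ := hC
    rw [Finset.mem_filter, Finset.mem_powerset]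
    have herase : C.erase e ⊆ F' := by
      intro x hx
      obtain ⟨hx1, hx2⟩ := Finset.mem_erase.mp hx
      exact (Finset.mem_insert.mp (hCsub hx2)).resolve_left hx1
    refine ⟨herase, ?_⟩
    by_cases heC : e ∈ C
    · exact ⟨k - 1, key1 hne hF' hCsub hcyc heC⟩
    · rw [Finset.erase_eq_of_notMem heC]
      have hCF : C ⊆ F' := fun x hx =>
        (Finset.mem_insert.mp (hCsub hx)).resolve_left (fun h => heC (h ▸ hx))
      exact ⟨k, (key2 hne hF' hCF hcyc).1⟩
  · -- maps back
    intro C' hC'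
    show (if ∃ a ∈ C', (D.ends a).2 = (D.ends e).1 then insert e C' else C') ∈
      Finset.filter (fun C => ∃ k, IsCycle D C k) (insert e F').powerset
    rw [Finset.mem_filter, Finset.mem_powerset] at hC'
    obtain ⟨hC'sub, k, hcyc⟩ := hC'
    rw [Finset.mem_filter, Finset.mem_powerset]
    by_cases ht : ∃ a ∈ C', (D.ends a).2 = (D.ends e).1
    · rw [if_pos ht]
      exact ⟨Finset.insert_subset_insert e hC'sub,
        k + 1, key4 he hne hF' hC'sub hcyc ht⟩
    · rw [if_neg ht]
      exact ⟨hC'sub.trans (Finset.subset_insert e F'),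
        k, key3 hne hF' hC'sub hcyc ht⟩
  · -- left inverse
    intro C hC
    show (if ∃ a ∈ C.erase e, (D.ends a).2 = (D.ends e).1 then insert e (C.erase e)
      else C.erase e) = C
    rw [Finset.mem_filter, Finset.mem_powerset] at hC
    obtain ⟨hCsub, k, hcyc⟩ := hC
    by_cases heC : e ∈ C
    · rw [if_pos (key5 hne hcyc heC)]
      exact Finset.insert_erase heC
    · have h1 : C.erase e = C := Finset.erase_eq_of_notMem heC
      rw [h1]
      have hCF : C ⊆ F' := fun x hx =>
        (Finset.mem_insert.mp (hCsub hx)).resolve_left (fun h => heC (h ▸ hx))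
      rw [if_neg (key2 hne hF' hCF hcyc).2]
  · -- right inverse
    intro C' hC'
    show (if ∃ a ∈ C', (D.ends a).2 = (D.ends e).1 then insert e C' else C').erase e = C'
    rw [Finset.mem_filter, Finset.mem_powerset] at hC'
    obtain ⟨hC'sub, _⟩ := hC'
    have heC' : e ∉ C' := fun h => heF (hC'sub h)
    by_cases ht : ∃ a ∈ C', (D.ends a).2 = (D.ends e).1
    · rw [if_pos ht]
      exact Finset.erase_insert heC'
    · rw [if_neg ht]
      exact Finset.erase_eq_of_notMem heC'

/-- Non-loop path-count transfer. -/
lemma kpF_insert_nonloop {D : MDigraph} {e : ℕ} (hne : ¬ D.IsLoop e)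
    {F' : Finset ℕ} (hF' : F' ⊆ (D.contractArc e).A) :
    kpF D (insert e F') = kpF (D.contractArc e) F' +
      (if ∀ a ∈ F', (D.ends a).2 ≠ (D.ends e).1 ∧ (D.ends a).1 ≠ (D.ends e).2
       then 1 else 0) := by
  have hne' : (D.ends e).1 ≠ (D.ends e).2 := hne
  have hF'' : ∀ a ∈ F', a ∈ D.A ∧ (D.ends a).1 ≠ (D.ends e).1 ∧ (D.ends a).2 ≠ (D.ends e).2 :=
    fun a ha => (mem_contract_A hne).mp (hF' ha)
  have heF : e ∉ F' := fun h => (hF'' e h).2.1 rfl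
  -- membership characterisations
  have hSmem : ∀ w, (w ∈ ((insert e F').image (fun a => (D.ends a).1)).filter
      (fun w => ((insert e F').filter (fun a => (D.ends a).2 = w)).card = 0)) ↔
      ((w = (D.ends e).1 ∨ ∃ a ∈ F', (D.ends a).1 = w) ∧ (D.ends e).2 ≠ w ∧
        ∀ a ∈ F', (D.ends a).2 ≠ w) := by
    intro w
    rw [Finset.mem_filter, Finset.card_eq_zero, Finset.filter_eq_empty_iff]
    constructor
    · rintro ⟨h1, h2⟩
      obtain ⟨a, ha, hta⟩ := Finset.mem_image.mp h1
      refine ⟨?_, h2 (Finset.mem_insert_self e F'), fun b hb => h2 (Finset.mem_insert_of_mem hb)⟩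
      rcases Finset.mem_insert.mp ha with rfl | haF
      · exact Or.inl hta.symm
      · exact Or.inr ⟨a, haF, hta⟩
    · rintro ⟨h1, h2, h3⟩
      constructor
      · rcases h1 with rfl | ⟨a, haF, hta⟩
        · exact Finset.mem_image.mpr ⟨e, Finset.mem_insert_self e F', rfl⟩
        · exact Finset.mem_image.mpr ⟨a, Finset.mem_insert_of_mem haF, hta⟩
      · intro b hb
        rcases Finset.mem_insert.mp hb with rfl | hbF
        · exact h2
        · exact h3 b hbF
  have hS'mem : ∀ w, (w ∈ (F'.image (fun a => ((D.contractArc e).ends a).1)).filter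
      (fun w => (F'.filter (fun a => ((D.contractArc e).ends a).2 = w)).card = 0)) ↔
      ((∃ a ∈ F', (if (D.ends a).1 = (D.ends e).2 then (D.ends e).1 else (D.ends a).1) = w) ∧
        ∀ a ∈ F', (D.ends a).2 ≠ w) := by
    intro w
    rw [Finset.mem_filter, Finset.card_eq_zero, Finset.filter_eq_empty_iff]
    constructor
    · rintro ⟨h1, h2⟩
      obtain ⟨a, haF, hta⟩ := Finset.mem_image.mp h1
      rw [contract_ends_apply hne] at hta
      refine ⟨⟨a, haF, hta⟩, fun b hbF hh => ?_⟩
      refine h2 hbF ?_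
      rw [contract_ends_apply hne]
      show (if (D.ends b).2 = (D.ends e).2 then (D.ends e).1 else (D.ends b).2) = w
      rw [if_neg (hF'' b hbF).2.2]
      exact hh
    · rintro ⟨⟨a, haF, hta⟩, h3⟩
      constructor
      · refine Finset.mem_image.mpr ⟨a, haF, ?_⟩
        rw [contract_ends_apply hne]
        exact hta
      · intro b hbF hh
        rw [contract_ends_apply hne] at hh
        refine h3 b hbF ?_
        rw [← hh]
        show (D.ends b).2 = (if (D.ends b).2 = (D.ends e).2 then (D.ends e).1 else (D.ends b).2)
        rw [if_neg (hF'' b hbF).2.2]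
  show (((insert e F').image (fun a => (D.ends a).1)).filter _).card = _
  by_cases hQ : ∀ a ∈ F', (D.ends a).2 ≠ (D.ends e).1 ∧ (D.ends a).1 ≠ (D.ends e).2
  · rw [if_pos hQ]
    have hset : ((insert e F').image (fun a => (D.ends a).1)).filter
        (fun w => ((insert e F').filter (fun a => (D.ends a).2 = w)).card = 0)
        = insert (D.ends e).1 ((F'.image (fun a => ((D.contractArc e).ends a).1)).filter
          (fun w => (F'.filter (fun a => ((D.contractArc e).ends a).2 = w)).card = 0)) := by
      ext w
      rw [hSmem w, Finset.mem_insert, hS'mem w]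
      constructor
      · rintro ⟨h1, h2, h3⟩
        rcases h1 with rfl | ⟨a, haF, hta⟩
        · exact Or.inl rfl
        · refine Or.inr ⟨⟨a, haF, ?_⟩, h3⟩
          rw [if_neg (fun hc => (hQ a haF).2 hc)]
          exact hta
      · rintro (rfl | ⟨⟨a, haF, hta⟩, h3⟩)
        · exact ⟨Or.inl rfl, fun hc => hne' hc.symm, fun a haF => (hQ a haF).1⟩
        · rw [if_neg (fun hc => (hQ a haF).2 hc)] at hta
          refine ⟨Or.inr ⟨a, haF, hta⟩, ?_, h3⟩
          intro hc
          exact (hQ a haF).2 (by rw [hta, ← hc])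
    rw [hset, Finset.card_insert_of_notMem]
    · rfl
    · intro hmem
      rw [hS'mem] at hmem
      obtain ⟨⟨a, haF, hta⟩, _⟩ := hmem
      by_cases hc : (D.ends a).1 = (D.ends e).2
      · rw [if_pos hc] at hta
        exact (hQ a haF).2 hc
      · rw [if_neg hc] at hta
        exact (hF'' a haF).2.1 hta
  · rw [if_neg hQ, Nat.add_zero]
    have hset : ((insert e F').image (fun a => (D.ends a).1)).filter
        (fun w => ((insert e F').filter (fun a => (D.ends a).2 = w)).card = 0)
        = (F'.image (fun a => ((D.contractArc e).ends a).1)).filter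
          (fun w => (F'.filter (fun a => ((D.contractArc e).ends a).2 = w)).card = 0) := by
      push_neg at hQ
      obtain ⟨a0, ha0F, ha0⟩ := hQ
      ext w
      rw [hSmem w, hS'mem w]
      constructor
      · rintro ⟨h1, h2, h3⟩
        refine ⟨?_, h3⟩
        rcases h1 with rfl | ⟨a, haF, hta⟩
        · -- w = u ; ¬Q gives an arc with head u or tail v
          by_cases hc : (D.ends a0).2 = (D.ends e).1
          · exact absurd hc (h3 a0 ha0F)
          · refine ⟨a0, ha0F, ?_⟩
            rw [if_pos (ha0 hc)]
        · refine ⟨a, haF, ?_⟩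
          rw [if_neg (fun hc => h2 (hc.symm.trans hta))]
          exact hta
      · rintro ⟨⟨a, haF, hta⟩, h3⟩
        by_cases hc : (D.ends a).1 = (D.ends e).2
        · rw [if_pos hc] at hta
          refine ⟨Or.inl hta.symm, fun h2 => hne' (hta ▸ h2.symm), h3⟩
        · rw [if_neg hc] at hta
          refine ⟨Or.inr ⟨a, haF, hta⟩, fun h2 => hc (hta.trans h2.symm), h3⟩
    rw [hset]
    rfl

/-! ### DegOK transfer -/

lemma loop_erase_avoid {D : MDigraph} {e : ℕ} (hl : D.IsLoop e) {F : Finset ℕ}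
    (hdeg : DegOK D F) (heF : e ∈ F) :
    ∀ a ∈ F.erase e, (D.ends a).1 ≠ (D.ends e).1 ∧ (D.ends a).2 ≠ (D.ends e).1 := by
  intro a ha
  obtain ⟨hane, haF⟩ := Finset.mem_erase.mp ha
  have hl' : (D.ends e).2 = (D.ends e).1 := (hl : (D.ends e).1 = (D.ends e).2).symm
  exact ⟨fun h => hane (degOK_unique_tail hdeg haF heF h rfl),
    fun h => hane (degOK_unique_head hdeg haF heF h hl')⟩

lemma loop_erase_sub {D : MDigraph} {e : ℕ} (hl : D.IsLoop e) {F : Finset ℕ}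
    (hdeg : DegOK D F) (heF : e ∈ F) (hFA : F ⊆ D.A) :
    F.erase e ⊆ (D.contractArc e).A := by
  intro a ha
  rw [contract_loop_A hl, Finset.mem_filter]
  exact ⟨hFA ((Finset.erase_subset e F) ha), loop_erase_avoid hl hdeg heF a ha⟩

lemma contract_loop_avoid {D : MDigraph} {e : ℕ} (hl : D.IsLoop e) {F' : Finset ℕ}
    (hF' : F' ⊆ (D.contractArc e).A) :
    ∀ a ∈ F', a ∈ D.A ∧ (D.ends a).1 ≠ (D.ends e).1 ∧ (D.ends a).2 ≠ (D.ends e).1 := by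
  intro a ha
  have := hF' ha
  rw [contract_loop_A hl, Finset.mem_filter] at this
  exact ⟨this.1, this.2⟩

lemma degOK_contract_loop {D : MDigraph} {e : ℕ} (hl : D.IsLoop e) {F : Finset ℕ}
    (hdeg : DegOK D F) (heF : e ∈ F) : DegOK (D.contractArc e) (F.erase e) := by
  have hE : ∀ x ∈ F.erase e, (D.contractArc e).ends x = D.ends x :=
    fun x _ => by rw [contract_loop_ends hl]
  exact (degOK_congr hE).mp (degOK_subset hdeg (Finset.erase_subset e F))

lemma degOK_insert_loop {D : MDigraph} {e : ℕ} (hl : D.IsLoop e) {F' : Finset ℕ}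
    (hF' : F' ⊆ (D.contractArc e).A) (hdeg : DegOK (D.contractArc e) F') :
    DegOK D (insert e F') := by
  have hE : ∀ x ∈ F', (D.contractArc e).ends x = D.ends x :=
    fun x _ => by rw [contract_loop_ends hl]
  have hdeg' : DegOK D F' := (degOK_congr hE).mpr hdeg
  have hav := contract_loop_avoid hl hF'
  have hl' : (D.ends e).2 = (D.ends e).1 := (hl : (D.ends e).1 = (D.ends e).2).symm
  intro w
  constructor
  · by_cases hw : (D.ends e).1 = w
    · rw [Finset.filter_insert, if_pos hw]
      have hempty : F'.filter (fun a => (D.ends a).1 = w) = ∅ := by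
        rw [Finset.filter_eq_empty_iff]
        intro a haF h
        exact (hav a haF).2.1 (h.trans hw.symm)
      rw [hempty]
      simp
    · rw [Finset.filter_insert, if_neg hw]
      exact (hdeg' w).1
  · by_cases hw : (D.ends e).2 = w
    · rw [Finset.filter_insert, if_pos hw]
      have hempty : F'.filter (fun a => (D.ends a).2 = w) = ∅ := by
        rw [Finset.filter_eq_empty_iff]
        intro a haF h
        exact (hav a haF).2.2 (h.trans (hw.symm.trans hl'))
      rw [hempty]
      simp
    · rw [Finset.filter_insert, if_neg hw]
      exact (hdeg' w).2

lemma nonloop_erase_sub {D : MDigraph} {e : ℕ} (hne : ¬ D.IsLoop e) {F : Finset ℕ}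
    (hdeg : DegOK D F) (heF : e ∈ F) (hFA : F ⊆ D.A) :
    F.erase e ⊆ (D.contractArc e).A := by
  intro a ha
  obtain ⟨hane, haF⟩ := Finset.mem_erase.mp ha
  rw [mem_contract_A hne]
  exact ⟨hFA haF, fun h => hane (degOK_unique_tail hdeg haF heF h rfl),
    fun h => hane (degOK_unique_head hdeg haF heF h rfl)⟩

lemma degOK_contract_nonloop {D : MDigraph} {e : ℕ} (hne : ¬ D.IsLoop e) {F : Finset ℕ}
    (hdeg : DegOK D F) (heF : e ∈ F) : DegOK (D.contractArc e) (F.erase e) := by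
  have hne' : (D.ends e).1 ≠ (D.ends e).2 := hne
  intro w
  constructor
  · rw [Finset.card_le_one]
    intro a ha b hb
    obtain ⟨haF, hta⟩ := Finset.mem_filter.mp ha
    obtain ⟨hbF, htb⟩ := Finset.mem_filter.mp hb
    obtain ⟨hane, haF'⟩ := Finset.mem_erase.mp haF
    obtain ⟨hbne, hbF'⟩ := Finset.mem_erase.mp hbF
    rw [contract_ends_apply hne] at hta htb
    have hta' : (if (D.ends a).1 = (D.ends e).2 then (D.ends e).1 else (D.ends a).1) = w := hta
    have htb' : (if (D.ends b).1 = (D.ends e).2 then (D.ends e).1 else (D.ends b).1) = w := htb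
    have hatane : (D.ends a).1 ≠ (D.ends e).1 :=
      fun h => hane (degOK_unique_tail hdeg haF' heF h rfl)
    have hbtane : (D.ends b).1 ≠ (D.ends e).1 :=
      fun h => hbne (degOK_unique_tail hdeg hbF' heF h rfl)
    by_cases hca : (D.ends a).1 = (D.ends e).2 <;> by_cases hcb : (D.ends b).1 = (D.ends e).2
    · exact degOK_unique_tail hdeg haF' hbF' hca hcb
    · rw [if_pos hca] at hta'
      rw [if_neg hcb] at htb'
      exact absurd (htb'.trans hta'.symm) hbtane
    · rw [if_neg hca] at hta'
      rw [if_pos hcb] at htb'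
      exact absurd (hta'.trans htb'.symm) hatane
    · rw [if_neg hca] at hta'
      rw [if_neg hcb] at htb'
      exact degOK_unique_tail hdeg haF' hbF' hta' htb'
  · rw [Finset.card_le_one]
    intro a ha b hb
    obtain ⟨haF, hta⟩ := Finset.mem_filter.mp ha
    obtain ⟨hbF, htb⟩ := Finset.mem_filter.mp hb
    obtain ⟨hane, haF'⟩ := Finset.mem_erase.mp haF
    obtain ⟨hbne, hbF'⟩ := Finset.mem_erase.mp hbF
    rw [contract_ends_apply hne] at hta htb
    have hta' : (if (D.ends a).2 = (D.ends e).2 then (D.ends e).1 else (D.ends a).2) = w := hta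
    have htb' : (if (D.ends b).2 = (D.ends e).2 then (D.ends e).1 else (D.ends b).2) = w := htb
    have hca : (D.ends a).2 ≠ (D.ends e).2 :=
      fun h => hane (degOK_unique_head hdeg haF' heF h rfl)
    have hcb : (D.ends b).2 ≠ (D.ends e).2 :=
      fun h => hbne (degOK_unique_head hdeg hbF' heF h rfl)
    rw [if_neg hca] at hta'
    rw [if_neg hcb] at htb'
    exact degOK_unique_head hdeg haF' hbF' hta' htb'

lemma degOK_insert_nonloop {D : MDigraph} {e : ℕ} (hne : ¬ D.IsLoop e) {F' : Finset ℕ}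
    (hF' : F' ⊆ (D.contractArc e).A) (hdeg : DegOK (D.contractArc e) F') :
    DegOK D (insert e F') := by
  have hne' : (D.ends e).1 ≠ (D.ends e).2 := hne
  have hF'' : ∀ a ∈ F', a ∈ D.A ∧ (D.ends a).1 ≠ (D.ends e).1 ∧ (D.ends a).2 ≠ (D.ends e).2 :=
    fun a ha => (mem_contract_A hne).mp (hF' ha)
  intro w
  constructor
  · by_cases hw : (D.ends e).1 = w
    · rw [Finset.filter_insert, if_pos hw]
      have hempty : F'.filter (fun a => (D.ends a).1 = w) = ∅ := by
        rw [Finset.filter_eq_empty_iff]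
        intro a haF h
        exact (hF'' a haF).2.1 (h.trans hw.symm)
      rw [hempty]
      simp
    · rw [Finset.filter_insert, if_neg hw, Finset.card_le_one]
      intro a ha b hb
      obtain ⟨haF, hta⟩ := Finset.mem_filter.mp ha
      obtain ⟨hbF, htb⟩ := Finset.mem_filter.mp hb
      by_cases hwv : w = (D.ends e).2
      · have hca : ((D.contractArc e).ends a).1 = (D.ends e).1 := by
          rw [contract_ends_apply hne]
          show (if (D.ends a).1 = (D.ends e).2 then (D.ends e).1 else (D.ends a).1) = (D.ends e).1
          rw [if_pos (hta.trans hwv)]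
        have hcb : ((D.contractArc e).ends b).1 = (D.ends e).1 := by
          rw [contract_ends_apply hne]
          show (if (D.ends b).1 = (D.ends e).2 then (D.ends e).1 else (D.ends b).1) = (D.ends e).1
          rw [if_pos (htb.trans hwv)]
        exact degOK_unique_tail hdeg haF hbF hca hcb
      · have hca : ((D.contractArc e).ends a).1 = w := by
          rw [contract_ends_apply hne]
          show (if (D.ends a).1 = (D.ends e).2 then (D.ends e).1 else (D.ends a).1) = w
          rw [if_neg (fun h => hwv (hta.symm.trans h))]
          exact hta
        have hcb : ((D.contractArc e).ends b).1 = w := by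
          rw [contract_ends_apply hne]
          show (if (D.ends b).1 = (D.ends e).2 then (D.ends e).1 else (D.ends b).1) = w
          rw [if_neg (fun h => hwv (htb.symm.trans h))]
          exact htb
        exact degOK_unique_tail hdeg haF hbF hca hcb
  · by_cases hw : (D.ends e).2 = w
    · rw [Finset.filter_insert, if_pos hw]
      have hempty : F'.filter (fun a => (D.ends a).2 = w) = ∅ := by
        rw [Finset.filter_eq_empty_iff]
        intro a haF h
        exact (hF'' a haF).2.2 (h.trans hw.symm)
      rw [hempty]
      simp
    · rw [Finset.filter_insert, if_neg hw, Finset.card_le_one]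
      intro a ha b hb
      obtain ⟨haF, hta⟩ := Finset.mem_filter.mp ha
      obtain ⟨hbF, htb⟩ := Finset.mem_filter.mp hb
      have hca : ((D.contractArc e).ends a).2 = w := by
        rw [contract_ends_apply hne]
        show (if (D.ends a).2 = (D.ends e).2 then (D.ends e).1 else (D.ends a).2) = w
        rw [if_neg (hF'' a haF).2.2]
        exact hta
      have hcb : ((D.contractArc e).ends b).2 = w := by
        rw [contract_ends_apply hne]
        show (if (D.ends b).2 = (D.ends e).2 then (D.ends e).1 else (D.ends b).2) = w
        rw [if_neg (hF'' b hbF).2.2]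
        exact htb
      exact degOK_unique_head hdeg haF hbF hca hcb

/-! ### Summation lemmas -/

lemma sum_del (D : MDigraph) (e : ℕ) :
    ∑ F ∈ (D.A.powerset.filter (fun F => DegOK D F)).filter (fun F => ¬ e ∈ F),
      (MvPolynomial.X 0 ^ F.card * MvPolynomial.X 1 ^ kcF D F *
        MvPolynomial.X 2 ^ kpF D F : MvPolynomial (Fin 3) ℝ)
    = (D.delArc e).triPoly := by
  unfold triPoly
  have hset : (D.A.powerset.filter (fun F => DegOK D F)).filter (fun F => ¬ e ∈ F)
      = (D.delArc e).A.powerset.filter (fun F => DegOK (D.delArc e) F) := by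
    ext F
    simp only [Finset.mem_filter, Finset.mem_powerset, delArc_A]
    constructor
    · rintro ⟨⟨h1, h2⟩, h3⟩
      exact ⟨Finset.subset_erase.mpr ⟨h1, h3⟩, (degOK_congr (fun x _ => rfl)).mp h2⟩
    · rintro ⟨h1, h2⟩
      obtain ⟨h1a, h1b⟩ := Finset.subset_erase.mp h1
      exact ⟨⟨h1a, (degOK_congr (fun x _ => rfl)).mpr h2⟩, h1b⟩
  rw [hset]
  refine Finset.sum_congr rfl (fun F hF => ?_)
  rw [Finset.mem_filter, Finset.mem_powerset, delArc_A] at hF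
  have hkc : kcF D F = kcF (D.delArc e) F :=
    kcF_congr (fun x hx => iff_of_true ((Finset.erase_subset e D.A) (hF.1 hx)) (hF.1 hx))
      (fun x _ => rfl)
  have hkp : kpF D F = kpF (D.delArc e) F := kpF_congr (fun x _ => rfl)
  rw [hkc, hkp]

lemma sum_loop (D : MDigraph) (e : ℕ) (he : e ∈ D.A) (hl : D.IsLoop e) :
    ∑ F ∈ (D.A.powerset.filter (fun F => DegOK D F)).filter (fun F => e ∈ F),
      (MvPolynomial.X 0 ^ F.card * MvPolynomial.X 1 ^ kcF D F *
        MvPolynomial.X 2 ^ kpF D F : MvPolynomial (Fin 3) ℝ)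
    = MvPolynomial.X 0 * MvPolynomial.X 1 * (D.contractArc e).triPoly := by
  unfold triPoly
  rw [Finset.mul_sum]
  refine Finset.sum_bij' (fun F _ => F.erase e) (fun F' _ => insert e F') ?_ ?_ ?_ ?_ ?_
  · intro F hF
    rw [Finset.mem_filter, Finset.mem_filter, Finset.mem_powerset] at hF
    obtain ⟨⟨hFA, hdeg⟩, heF⟩ := hF
    show F.erase e ∈ (D.contractArc e).A.powerset.filter (fun F => DegOK (D.contractArc e) F)
    rw [Finset.mem_filter, Finset.mem_powerset]
    exact ⟨loop_erase_sub hl hdeg heF hFA, degOK_contract_loop hl hdeg heF⟩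
  · intro F' hF'
    rw [Finset.mem_filter, Finset.mem_powerset] at hF'
    obtain ⟨hsub, hdeg⟩ := hF'
    show insert e F' ∈ (D.A.powerset.filter (fun F => DegOK D F)).filter (fun F => e ∈ F)
    rw [Finset.mem_filter, Finset.mem_filter, Finset.mem_powerset]
    refine ⟨⟨Finset.insert_subset he (fun x hx => ?_), degOK_insert_loop hl hsub hdeg⟩,
      Finset.mem_insert_self e F'⟩
    exact (contract_loop_avoid hl hsub x hx).1
  · intro F hF
    rw [Finset.mem_filter] at hF
    exact Finset.insert_erase hF.2
  · intro F' hF'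
    rw [Finset.mem_filter, Finset.mem_powerset] at hF'
    exact Finset.erase_insert (fun h => (contract_loop_avoid hl hF'.1 e h).2.1 rfl)
  · intro F hF
    rw [Finset.mem_filter, Finset.mem_filter, Finset.mem_powerset] at hF
    obtain ⟨⟨hFA, hdeg⟩, heF⟩ := hF
    show (MvPolynomial.X 0 ^ F.card * MvPolynomial.X 1 ^ kcF D F *
        MvPolynomial.X 2 ^ kpF D F : MvPolynomial (Fin 3) ℝ)
      = MvPolynomial.X 0 * MvPolynomial.X 1 *
        (MvPolynomial.X 0 ^ (F.erase e).card *
          MvPolynomial.X 1 ^ kcF (D.contractArc e) (F.erase e) *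
          MvPolynomial.X 2 ^ kpF (D.contractArc e) (F.erase e))
    have hsub := loop_erase_sub hl hdeg heF hFA
    have h1 : F.card = (F.erase e).card + 1 := (Finset.card_erase_add_one heF).symm
    have h2 : kcF D F = kcF (D.contractArc e) (F.erase e) + 1 := by
      conv_lhs => rw [← Finset.insert_erase heF]
      rw [kcF_insert_loop he hl (Finset.notMem_erase e F)]
      congr 1
      exact kcF_congr
        (fun x hx => iff_of_true (hFA ((Finset.erase_subset e F) hx)) (hsub hx))
        (fun x _ => by rw [contract_loop_ends hl])
    have h3 : kpF D F = kpF (D.contractArc e) (F.erase e) := by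
      conv_lhs => rw [← Finset.insert_erase heF]
      rw [kpF_insert_loop hl (loop_erase_avoid hl hdeg heF)]
      exact kpF_congr (fun x _ => by rw [contract_loop_ends hl])
    rw [h1, h2, h3, pow_succ, pow_succ]
    ring

lemma sum_nonloop (D : MDigraph) (e : ℕ) (he : e ∈ D.A) (hne : ¬ D.IsLoop e) :
    ∑ F ∈ (D.A.powerset.filter (fun F => DegOK D F)).filter (fun F => e ∈ F),
      (MvPolynomial.X 0 ^ F.card * MvPolynomial.X 1 ^ kcF D F *
        MvPolynomial.X 2 ^ kpF D F : MvPolynomial (Fin 3) ℝ)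
    = ∑ F' ∈ (D.contractArc e).A.powerset.filter (fun F => DegOK (D.contractArc e) F),
        MvPolynomial.X 0 *
          (MvPolynomial.X 0 ^ F'.card * MvPolynomial.X 1 ^ kcF (D.contractArc e) F' *
            MvPolynomial.X 2 ^ kpF (D.contractArc e) F') *
          (if ∀ a ∈ F', (D.ends a).2 ≠ (D.ends e).1 ∧ (D.ends a).1 ≠ (D.ends e).2
           then MvPolynomial.X 2 else 1) := by
  refine Finset.sum_bij' (fun F _ => F.erase e) (fun F' _ => insert e F') ?_ ?_ ?_ ?_ ?_
  · intro F hF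
    rw [Finset.mem_filter, Finset.mem_filter, Finset.mem_powerset] at hF
    obtain ⟨⟨hFA, hdeg⟩, heF⟩ := hF
    show F.erase e ∈ (D.contractArc e).A.powerset.filter (fun F => DegOK (D.contractArc e) F)
    rw [Finset.mem_filter, Finset.mem_powerset]
    exact ⟨nonloop_erase_sub hne hdeg heF hFA, degOK_contract_nonloop hne hdeg heF⟩
  · intro F' hF'
    rw [Finset.mem_filter, Finset.mem_powerset] at hF'
    obtain ⟨hsub, hdeg⟩ := hF'
    show insert e F' ∈ (D.A.powerset.filter (fun F => DegOK D F)).filter (fun F => e ∈ F)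
    rw [Finset.mem_filter, Finset.mem_filter, Finset.mem_powerset]
    refine ⟨⟨Finset.insert_subset he (fun x hx => ((mem_contract_A hne).mp (hsub hx)).1),
      degOK_insert_nonloop hne hsub hdeg⟩, Finset.mem_insert_self e F'⟩
  · intro F hF
    rw [Finset.mem_filter] at hF
    exact Finset.insert_erase hF.2
  · intro F' hF'
    rw [Finset.mem_filter, Finset.mem_powerset] at hF'
    exact Finset.erase_insert (fun h => ((mem_contract_A hne).mp (hF'.1 h)).2.1 rfl)
  · intro F hF
    rw [Finset.mem_filter, Finset.mem_filter, Finset.mem_powerset] at hF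
    obtain ⟨⟨hFA, hdeg⟩, heF⟩ := hF
    have hsub := nonloop_erase_sub hne hdeg heF hFA
    show (MvPolynomial.X 0 ^ F.card * MvPolynomial.X 1 ^ kcF D F *
        MvPolynomial.X 2 ^ kpF D F : MvPolynomial (Fin 3) ℝ)
      = MvPolynomial.X 0 *
          (MvPolynomial.X 0 ^ (F.erase e).card *
            MvPolynomial.X 1 ^ kcF (D.contractArc e) (F.erase e) *
            MvPolynomial.X 2 ^ kpF (D.contractArc e) (F.erase e)) *
          (if ∀ a ∈ F.erase e, (D.ends a).2 ≠ (D.ends e).1 ∧ (D.ends a).1 ≠ (D.ends e).2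
           then MvPolynomial.X 2 else 1)
    have h1 : F.card = (F.erase e).card + 1 := (Finset.card_erase_add_one heF).symm
    have h2 : kcF D F = kcF (D.contractArc e) (F.erase e) := by
      conv_lhs => rw [← Finset.insert_erase heF]
      exact kcF_insert_nonloop he hne hsub
    have h3 : kpF D F = kpF (D.contractArc e) (F.erase e) +
        (if ∀ a ∈ F.erase e, (D.ends a).2 ≠ (D.ends e).1 ∧ (D.ends a).1 ≠ (D.ends e).2
         then 1 else 0) := by
      conv_lhs => rw [← Finset.insert_erase heF]
      exact kpF_insert_nonloop hne hsub
    rw [h1, h2, h3, pow_succ, pow_add]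
    by_cases hQ : ∀ a ∈ F.erase e, (D.ends a).2 ≠ (D.ends e).1 ∧ (D.ends a).1 ≠ (D.ends e).2
    · rw [if_pos hQ, if_pos hQ, pow_one]
      ring
    · rw [if_neg hQ, if_neg hQ, pow_zero]
      ring

lemma sum_extract (D : MDigraph) (e : ℕ) (he : e ∈ D.A) (hne : ¬ D.IsLoop e) :
    ∑ F' ∈ ((D.contractArc e).A.powerset.filter
        (fun F => DegOK (D.contractArc e) F)).filter
        (fun F' => ∀ a ∈ F', (D.ends a).2 ≠ (D.ends e).1 ∧ (D.ends a).1 ≠ (D.ends e).2),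
      (MvPolynomial.X 0 ^ F'.card * MvPolynomial.X 1 ^ kcF (D.contractArc e) F' *
        MvPolynomial.X 2 ^ kpF (D.contractArc e) F' : MvPolynomial (Fin 3) ℝ)
    = (D.extractArc e).triPoly := by
  unfold triPoly
  have hends : ∀ (F' : Finset ℕ), F' ⊆ (D.contractArc e).A →
      (∀ a ∈ F', (D.ends a).2 ≠ (D.ends e).1 ∧ (D.ends a).1 ≠ (D.ends e).2) →
      ∀ x ∈ F', (D.extractArc e).ends x = (D.contractArc e).ends x := by
    intro F' hsub hQ x hx
    rw [extract_ends, contract_ends_eq hne (hQ x hx).2 ((mem_contract_A hne).mp (hsub hx)).2.2]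
  have hset : ((D.contractArc e).A.powerset.filter
        (fun F => DegOK (D.contractArc e) F)).filter
        (fun F' => ∀ a ∈ F', (D.ends a).2 ≠ (D.ends e).1 ∧ (D.ends a).1 ≠ (D.ends e).2)
      = (D.extractArc e).A.powerset.filter (fun F => DegOK (D.extractArc e) F) := by
    ext F'
    simp only [Finset.mem_filter, Finset.mem_powerset]
    constructor
    · rintro ⟨⟨h1, h2⟩, h3⟩
      refine ⟨?_, (degOK_congr (hends F' h1 h3)).mp h2⟩
      intro a ha
      have h4 := (mem_contract_A hne).mp (h1 ha)
      rw [extract_A, Finset.mem_filter]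
      exact ⟨h4.1, h4.2.1, (h3 a ha).2, (h3 a ha).1, h4.2.2⟩
    · rintro ⟨h1, h2⟩
      have h4 : ∀ a ∈ F', a ∈ D.A ∧ (D.ends a).1 ≠ (D.ends e).1 ∧
          (D.ends a).1 ≠ (D.ends e).2 ∧ (D.ends a).2 ≠ (D.ends e).1 ∧
          (D.ends a).2 ≠ (D.ends e).2 := by
        intro a ha
        have := h1 ha
        rw [extract_A, Finset.mem_filter] at this
        exact this
      have h5 : F' ⊆ (D.contractArc e).A := fun a ha =>
        (mem_contract_A hne).mpr ⟨(h4 a ha).1, (h4 a ha).2.1, (h4 a ha).2.2.2.2⟩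
      have h6 : ∀ a ∈ F', (D.ends a).2 ≠ (D.ends e).1 ∧ (D.ends a).1 ≠ (D.ends e).2 :=
        fun a ha => ⟨(h4 a ha).2.2.2.1, (h4 a ha).2.2.1⟩
      exact ⟨⟨h5, (degOK_congr (hends F' h5 h6)).mpr h2⟩, h6⟩
  rw [hset]
  refine Finset.sum_congr rfl (fun F' hF' => ?_)
  rw [Finset.mem_filter, Finset.mem_powerset] at hF'
  obtain ⟨h1, h2⟩ := hF'
  have h4 : ∀ a ∈ F', a ∈ D.A ∧ (D.ends a).1 ≠ (D.ends e).1 ∧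
      (D.ends a).1 ≠ (D.ends e).2 ∧ (D.ends a).2 ≠ (D.ends e).1 ∧
      (D.ends a).2 ≠ (D.ends e).2 := by
    intro a ha
    have := h1 ha
    rw [extract_A, Finset.mem_filter] at this
    exact this
  have h5 : F' ⊆ (D.contractArc e).A := fun a ha =>
    (mem_contract_A hne).mpr ⟨(h4 a ha).1, (h4 a ha).2.1, (h4 a ha).2.2.2.2⟩
  have h6 : ∀ x ∈ F', (D.extractArc e).ends x = (D.contractArc e).ends x :=
    hends F' h5 (fun a ha => ⟨(h4 a ha).2.2.2.1, (h4 a ha).2.2.1⟩)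
  have hkc : kcF (D.contractArc e) F' = kcF (D.extractArc e) F' :=
    kcF_congr (fun x hx => iff_of_true (h5 hx) (h1 hx)) h6
  have hkp : kpF (D.contractArc e) F' = kpF (D.extractArc e) F' := kpF_congr h6
  rw [hkc, hkp]

end MDigraph

/-- for an arc `e` of `D`: if `e` is a loop then
`σ̂π(D) = σ̂π(D_{-e}) + x·y·σ̂π(D_{/e})`; otherwise
`σ̂π(D) = σ̂π(D_{-e}) + x·σ̂π(D_{/e}) + x·(z−1)·σ̂π(D_{†e})`; moreover
`σ̂π(E_n) = 1` for every arc-less digraph. -/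
theorem triPoly_recurrence (D : MDigraph) (hwf : D.WellFormed)
    (e : ℕ) (he : e ∈ D.A) :
    (D.IsLoop e → D.triPoly = (D.delArc e).triPoly +
        MvPolynomial.X 0 * MvPolynomial.X 1 * (D.contractArc e).triPoly) ∧
      (¬ D.IsLoop e → D.triPoly = (D.delArc e).triPoly +
        MvPolynomial.X 0 * (D.contractArc e).triPoly +
        MvPolynomial.X 0 * (MvPolynomial.X 2 - 1) * (D.extractArc e).triPoly) ∧
      (∀ D' : MDigraph, D'.A = ∅ → D'.triPoly = 1) := by
  have hD : D.triPoly =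
      (∑ F ∈ (D.A.powerset.filter (fun F => MDigraph.DegOK D F)).filter (fun F => e ∈ F),
        (MvPolynomial.X 0 ^ F.card * MvPolynomial.X 1 ^ MDigraph.kcF D F *
          MvPolynomial.X 2 ^ MDigraph.kpF D F : MvPolynomial (Fin 3) ℝ)) +
      ∑ F ∈ (D.A.powerset.filter (fun F => MDigraph.DegOK D F)).filter (fun F => ¬ e ∈ F),
        (MvPolynomial.X 0 ^ F.card * MvPolynomial.X 1 ^ MDigraph.kcF D F *
          MvPolynomial.X 2 ^ MDigraph.kpF D F : MvPolynomial (Fin 3) ℝ) := by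
    unfold MDigraph.triPoly
    rw [Finset.sum_filter_add_sum_filter_not]
  refine ⟨?_, ?_, fun D' h => MDigraph.triPoly_of_empty D' h⟩
  · intro hl
    rw [hD, MDigraph.sum_del D e, MDigraph.sum_loop D e he hl]
    ring
  · intro hne
    rw [hD, MDigraph.sum_del D e, MDigraph.sum_nonloop D e he hne]
    rw [← Finset.sum_filter_add_sum_filter_not
      ((D.contractArc e).A.powerset.filter (fun F => MDigraph.DegOK (D.contractArc e) F))
      (fun F' => ∀ a ∈ F', (D.ends a).2 ≠ (D.ends e).1 ∧ (D.ends a).1 ≠ (D.ends e).2)]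
    have hQsum : ∑ F' ∈ ((D.contractArc e).A.powerset.filter
          (fun F => MDigraph.DegOK (D.contractArc e) F)).filter
          (fun F' => ∀ a ∈ F', (D.ends a).2 ≠ (D.ends e).1 ∧ (D.ends a).1 ≠ (D.ends e).2),
        (MvPolynomial.X 0 *
          (MvPolynomial.X 0 ^ F'.card *
            MvPolynomial.X 1 ^ MDigraph.kcF (D.contractArc e) F' *
            MvPolynomial.X 2 ^ MDigraph.kpF (D.contractArc e) F') *
          (if ∀ a ∈ F', (D.ends a).2 ≠ (D.ends e).1 ∧ (D.ends a).1 ≠ (D.ends e).2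
           then MvPolynomial.X 2 else 1) : MvPolynomial (Fin 3) ℝ)
        = MvPolynomial.X 0 * MvPolynomial.X 2 * (D.extractArc e).triPoly := by
      rw [← MDigraph.sum_extract D e he hne, Finset.mul_sum]
      refine Finset.sum_congr rfl (fun F' hF' => ?_)
      rw [Finset.mem_filter] at hF'
      rw [if_pos hF'.2]
      ring
    have hNsum : ∑ F' ∈ ((D.contractArc e).A.powerset.filter
          (fun F => MDigraph.DegOK (D.contractArc e) F)).filter
          (fun F' => ¬ ∀ a ∈ F', (D.ends a).2 ≠ (D.ends e).1 ∧ (D.ends a).1 ≠ (D.ends e).2),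
        (MvPolynomial.X 0 *
          (MvPolynomial.X 0 ^ F'.card *
            MvPolynomial.X 1 ^ MDigraph.kcF (D.contractArc e) F' *
            MvPolynomial.X 2 ^ MDigraph.kpF (D.contractArc e) F') *
          (if ∀ a ∈ F', (D.ends a).2 ≠ (D.ends e).1 ∧ (D.ends a).1 ≠ (D.ends e).2
           then MvPolynomial.X 2 else 1) : MvPolynomial (Fin 3) ℝ)
        = MvPolynomial.X 0 * ∑ F' ∈ ((D.contractArc e).A.powerset.filter
            (fun F => MDigraph.DegOK (D.contractArc e) F)).filter
            (fun F' => ¬ ∀ a ∈ F', (D.ends a).2 ≠ (D.ends e).1 ∧ (D.ends a).1 ≠ (D.ends e).2),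
          (MvPolynomial.X 0 ^ F'.card *
            MvPolynomial.X 1 ^ MDigraph.kcF (D.contractArc e) F' *
            MvPolynomial.X 2 ^ MDigraph.kpF (D.contractArc e) F' : MvPolynomial (Fin 3) ℝ) := by
      rw [Finset.mul_sum]
      refine Finset.sum_congr rfl (fun F' hF' => ?_)
      rw [Finset.mem_filter] at hF'
      rw [if_neg hF'.2]
      ring
    rw [hQsum, hNsum]
    have hC : (D.contractArc e).triPoly =
        (∑ F' ∈ ((D.contractArc e).A.powerset.filter
            (fun F => MDigraph.DegOK (D.contractArc e) F)).filter
            (fun F' => ∀ a ∈ F', (D.ends a).2 ≠ (D.ends e).1 ∧ (D.ends a).1 ≠ (D.ends e).2),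
          (MvPolynomial.X 0 ^ F'.card *
            MvPolynomial.X 1 ^ MDigraph.kcF (D.contractArc e) F' *
            MvPolynomial.X 2 ^ MDigraph.kpF (D.contractArc e) F' : MvPolynomial (Fin 3) ℝ)) +
        ∑ F' ∈ ((D.contractArc e).A.powerset.filter
            (fun F => MDigraph.DegOK (D.contractArc e) F)).filter
            (fun F' => ¬ ∀ a ∈ F', (D.ends a).2 ≠ (D.ends e).1 ∧ (D.ends a).1 ≠ (D.ends e).2),
          (MvPolynomial.X 0 ^ F'.card *
            MvPolynomial.X 1 ^ MDigraph.kcF (D.contractArc e) F' *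
            MvPolynomial.X 2 ^ MDigraph.kpF (D.contractArc e) F' : MvPolynomial (Fin 3) ℝ) := by
      unfold MDigraph.triPoly
      rw [Finset.sum_filter_add_sum_filter_not]
    rw [hC, ← MDigraph.sum_extract D e he hne]
    ring
end

section
/- Let D=(V,E) be a finite multidigraph. Then for every nonzero real number x and every real y, the geometric cover polynomial satisfies C̃(D;x,y) = x^{|V|}·σ̂π(D; 1/x, y, 1). -/
open Classical

/-- For a degree-constrained arc set, the number of covered vertices equals
`|F| + kpF`. -/
lemma covered_eq_aux (D : MDigraph) (F : Finset ℕ) (hdeg : MDigraph.DegOK D F) :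
    MDigraph.coveredCard D F = F.card + MDigraph.kpF D F := by
  classical
  let T := F.image (fun a => (D.ends a).1)
  let H := F.image (fun a => (D.ends a).2)
  have hinj : Set.InjOn (fun a => (D.ends a).2) ↑F := by
    intro a ha b hb hab
    have h := (hdeg (D.ends a).2).2
    have ha' : a ∈ F.filter (fun c => (D.ends c).2 = (D.ends a).2) := by
      simp [Finset.mem_filter]; exact ha
    have hb' : b ∈ F.filter (fun c => (D.ends c).2 = (D.ends a).2) := by
      simp only [Finset.mem_filter]
      exact ⟨hb, hab.symm⟩
    exact Finset.card_le_one.mp h a ha' b hb'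
  have hHcard : H.card = F.card := Finset.card_image_of_injOn hinj
  have hkp : MDigraph.kpF D F = (T \ H).card := by
    unfold MDigraph.kpF
    congr 1
    ext w
    simp only [T, H, Finset.mem_filter, Finset.mem_sdiff,
      Finset.card_eq_zero, Finset.filter_eq_empty_iff, Finset.mem_image, not_exists]
    tauto
  have hcov : MDigraph.coveredCard D F = (T \ H).card + H.card := by
    unfold MDigraph.coveredCard
    rw [← Finset.card_sdiff_add_card]
  omega

/-- for every nonzero real `x` and every real `y`,
`C̃(D;x,y) = x^{|V|}·σ̂π(D; 1/x, y, 1)`. -/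
theorem geomCover_eq_triPoly (D : MDigraph) (hwf : D.WellFormed)
    (x y : ℝ) (hx : x ≠ 0) :
    D.geomCover x y =
      x ^ D.V.card * MvPolynomial.eval (![1 / x, y, 1] : Fin 3 → ℝ) D.triPoly := by
  classical
  unfold MDigraph.geomCover MDigraph.triPoly
  rw [map_sum, Finset.mul_sum]
  apply Finset.sum_congr rfl
  intro F hF
  rw [Finset.mem_filter, Finset.mem_powerset] at hF
  obtain ⟨hFA, hdeg⟩ := hF
  have hcov := covered_eq_aux D F hdeg
  have hle : MDigraph.coveredCard D F ≤ D.V.card := by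
    apply Finset.card_le_card
    intro w hw
    simp only [MDigraph.coveredCard, Finset.mem_union, Finset.mem_image] at hw
    rcases hw with ⟨a, ha, rfl⟩ | ⟨a, ha, rfl⟩
    · exact (hwf a (hFA ha)).1
    · exact (hwf a (hFA ha)).2
  have hfle : F.card ≤ D.V.card := by omega
  have hexp : MDigraph.kpF D F + (D.V.card - MDigraph.coveredCard D F)
      = D.V.card - F.card := by omega
  simp only [map_mul, map_pow, MvPolynomial.eval_X, Matrix.cons_val_zero,
    Matrix.cons_val_one, Matrix.head_cons, Matrix.cons_val_two, Matrix.tail_cons,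
    one_pow, mul_one]
  rw [hexp, pow_sub₀ x hx hfle, one_div, inv_pow, mul_assoc]
end
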